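/- arXiv:2512.12143 — 3 statements merged into one kernel-verified Lean document; each statement's English description precedes it below -/
import Mathlib

section
/- Let n ≥ 3 and let G = (G_1, …, G_n) be a collection of n graphs on a common vertex set V with |V| = n such that σ₂(G_i) ≥ n for all i ∈ {1, …, n}. If there exist two distinct vertices u, v ∈ V such that uv is an edge of G_i for every i ∈ {1, …, n}, then G contains a rainbow Hamiltonian cycle. -/
open SimpleGraph

set_option linter.unusedSectionVars false
set_option linter.unusedVariables false
set_option maxHeartbeats 1000000

/-- A coloring `c` witnesses that the collection `G` contains the edge set `E` as a rainbow
subgraph: `c` is injective on `E` and every edge `e ∈ E` lies in the graph of its color. -/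
def RainbowColoring {V : Type*} {m : ℕ} (G : Fin m → SimpleGraph V) (E : Set (Sym2 V))
    (c : Sym2 V → Fin m) : Prop :=
  Set.InjOn c E ∧ ∀ e ∈ E, e ∈ (G (c e)).edgeSet

/-- The collection `G` contains the edge set `E` as a rainbow subgraph. -/
def ContainsRainbow {V : Type*} {m : ℕ} (G : Fin m → SimpleGraph V) (E : Set (Sym2 V)) : Prop :=
  ∃ c, RainbowColoring G E c

/-- `G` contains a rainbow Hamiltonian `u,v`-path. -/
def RainbowHamPath {V : Type*} [DecidableEq V] {m : ℕ} (G : Fin m → SimpleGraph V)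
    (u v : V) : Prop :=
  ∃ p : (⊤ : SimpleGraph V).Walk u v, p.IsHamiltonian ∧ ContainsRainbow G {e | e ∈ p.edges}

/-- `G` contains a rainbow Hamiltonian cycle. -/
def RainbowHamCycle {V : Type*} [DecidableEq V] {m : ℕ} (G : Fin m → SimpleGraph V) : Prop :=
  ∃ (a : V) (p : (⊤ : SimpleGraph V).Walk a a), p.IsHamiltonianCycle ∧
    ContainsRainbow G {e | e ∈ p.edges}

/-- `σ₂(F) ≥ s`: any two distinct non-adjacent vertices have degree sum at least `s`. -/
def SigmaTwoGE {V : Type*} (F : SimpleGraph V) (s : ℕ) : Prop :=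
  ∀ ⦃x y : V⦄, x ≠ y → ¬F.Adj x y → s ≤ (F.neighborSet x).ncard + (F.neighborSet y).ncard

/-- A linear forest: an acyclic graph with maximum degree at most 2
(equivalently, every component is a path). -/
def IsLinearForest {V : Type*} (H : SimpleGraph V) : Prop :=
  H.IsAcyclic ∧ ∀ x : V, (H.neighborSet x).ncard ≤ 2

section RBAux
variable {V : Type*} [Fintype V] [DecidableEq V] {n : ℕ}

lemma RB_Iio_ncard (k : ℕ) : (Set.Iio k).ncard = k := by
  rw [Set.ncard_eq_toFinset_card']; simp

lemma RB_image_ncard_le {α : Type*} (f : ℕ → α) (k : ℕ) : (f '' Set.Iio k).ncard ≤ k := by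
  calc (f '' Set.Iio k).ncard ≤ (Set.Iio k).ncard := Set.ncard_image_le (Set.finite_Iio k)
  _ = k := RB_Iio_ncard k

lemma RB_fresh (hV : Fintype.card V = n) (f : ℕ → V) {k : ℕ} (hk : k < n) :
    ∃ w : V, ∀ i, i < k → f i ≠ w := by
  by_contra h
  push_neg at h
  have hs : (Set.univ : Set V) ⊆ f '' Set.Iio k := by
    intro w _
    obtain ⟨i, hi, hfi⟩ := h w
    exact ⟨i, hi, hfi⟩
  have := Set.ncard_le_ncard hs (Set.toFinite _)
  rw [Set.ncard_univ, Nat.card_eq_fintype_card, hV] at this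
  have := RB_image_ncard_le f k
  omega

lemma RB_unused1 (c : ℕ → Fin n) {m : ℕ} (hm : m < n) :
    ∃ a : Fin n, ∀ i, i < m → c i ≠ a := by
  by_contra h
  push_neg at h
  have hs : (Set.univ : Set (Fin n)) ⊆ c '' Set.Iio m := by
    intro a _
    obtain ⟨i, hi, hci⟩ := h a
    exact ⟨i, hi, hci⟩
  have := Set.ncard_le_ncard hs (Set.toFinite _)
  rw [Set.ncard_univ, Nat.card_eq_fintype_card, Fintype.card_fin] at this
  have := RB_image_ncard_le c m
  omega

lemma RB_unused2 (c : ℕ → Fin n) {m : ℕ} (hm : m + 2 ≤ n) :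
    ∃ a b : Fin n, a ≠ b ∧ (∀ i, i < m → c i ≠ a) ∧ (∀ i, i < m → c i ≠ b) := by
  set S := c '' Set.Iio m with hS
  have h1 : S.ncard + Sᶜ.ncard = n := by
    rw [Set.ncard_add_ncard_compl, Nat.card_eq_fintype_card, Fintype.card_fin]
  have h2 : S.ncard ≤ m := RB_image_ncard_le c m
  have h3 : 1 < Sᶜ.ncard := by omega
  rw [Set.one_lt_ncard_iff (Set.toFinite _)] at h3
  obtain ⟨a, b, ha, hb, hab⟩ := h3
  refine ⟨a, b, hab, fun i hi hci => ha ⟨i, hi, hci⟩, fun i hi hci => hb ⟨i, hi, hci⟩⟩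

lemma RB_crossing_edge (hV : Fintype.card V = n) {F : SimpleGraph V}
    (hσ : SigmaTwoGE F n) {S : Set V} (hS : S.Nonempty) (hS' : Sᶜ.Nonempty) :
    ∃ x ∈ S, ∃ y ∈ Sᶜ, F.Adj x y := by
  obtain ⟨x, hx⟩ := hS
  obtain ⟨y, hy⟩ := hS'
  by_cases hadj : F.Adj x y
  · exact ⟨x, hx, y, hy, hadj⟩
  have hne : x ≠ y := fun h => hy (h ▸ hx)
  have hdeg := hσ hne hadj
  -- find common neighbor
  have hsub : F.neighborSet x ∪ F.neighborSet y ⊆ ({x, y} : Set V)ᶜ := by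
    intro z hz
    simp only [Set.mem_compl_iff, Set.mem_insert_iff, Set.mem_singleton_iff]
    rintro (rfl | rfl)
    · rcases hz with hz | hz
      · exact F.irrefl hz
      · exact hadj (F.adj_symm hz)
    · rcases hz with hz | hz
      · exact hadj hz
      · exact F.irrefl hz
  have hcompl : (({x, y} : Set V)ᶜ).ncard = n - 2 := by
    have := Set.ncard_add_ncard_compl ({x, y} : Set V)
    rw [Set.ncard_pair hne, Nat.card_eq_fintype_card, hV] at this
    omega
  have hunion : (F.neighborSet x ∪ F.neighborSet y).ncard ≤ n - 2 := by
    rw [← hcompl]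
    exact Set.ncard_le_ncard hsub (Set.toFinite _)
  have hsum := Set.ncard_union_add_ncard_inter (F.neighborSet x) (F.neighborSet y)
    (Set.toFinite _) (Set.toFinite _)
  have hn3 : 2 ≤ n := by
    have h2 : 2 ≤ Fintype.card V := by
      have : ({x, y} : Finset V).card = 2 := Finset.card_pair hne
      calc 2 = ({x,y} : Finset V).card := this.symm
      _ ≤ Fintype.card V := Finset.card_le_univ _
    omega
  have hint : 0 < (F.neighborSet x ∩ F.neighborSet y).ncard := by omega
  rw [Set.ncard_pos (Set.toFinite _)] at hint
  obtain ⟨z, hzx, hzy⟩ := hint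
  by_cases hzS : z ∈ S
  · exact ⟨z, hzS, y, hy, F.adj_symm hzy⟩
  · exact ⟨x, hx, z, hzS, hzx⟩

/-- Core data of a rainbow path on `k` vertices `f 0, …, f (k-1)` with edge `i` colored `c i`. -/
def RBPathCore (G : Fin n → SimpleGraph V) (k : ℕ) (f : ℕ → V) (c : ℕ → Fin n) : Prop :=
  Set.InjOn f (Set.Iio k) ∧ Set.InjOn c (Set.Iio (k-1)) ∧
  ∀ i, i + 1 < k → (G (c i)).Adj (f i) (f (i+1))

/-- Core data of a rainbow cycle on `k` vertices: path edges plus closing edge colored `d (k-1)`. -/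
def RBCycCore (G : Fin n → SimpleGraph V) (k : ℕ) (g : ℕ → V) (d : ℕ → Fin n) : Prop :=
  Set.InjOn g (Set.Iio k) ∧ Set.InjOn d (Set.Iio k) ∧
  (∀ i, i + 1 < k → (G (d i)).Adj (g i) (g (i+1))) ∧
  (G (d (k-1))).Adj (g (k-1)) (g 0)

/-- The pair `u,v` appears as an edge of the path. -/
def RBUV (u v : V) (k : ℕ) (f : ℕ → V) : Prop :=
  ∃ j, j + 1 < k ∧ s(f j, f (j+1)) = s(u, v)

lemma RB_cross (hV : Fintype.card V = n) {F F' : SimpleGraph V} {k : ℕ} {f : ℕ → V}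
    (hf : Set.InjOn f (Set.Iio k)) (hk : 2 ≤ k)
    (hN : F.neighborSet (f 0) ⊆ f '' Set.Iio k)
    (hN' : F'.neighborSet (f (k-1)) ⊆ f '' Set.Iio k)
    (hdeg : n ≤ (F.neighborSet (f 0)).ncard + (F'.neighborSet (f (k-1))).ncard) :
    n ≤ ({i | i + 1 < k ∧ F.Adj (f 0) (f (i+1)) ∧ F'.Adj (f (k-1)) (f i)} : Set ℕ).ncard
      + (k - 1) := by
  set Ip : Set ℕ := {i | i + 1 < k ∧ F.Adj (f 0) (f (i+1))} with hIp
  set Iq : Set ℕ := {i | i + 1 < k ∧ F'.Adj (f (k-1)) (f i)} with hIq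
  have h1 : F.neighborSet (f 0) = (fun i => f (i+1)) '' Ip := by
    ext y
    constructor
    · intro hy
      obtain ⟨m, hm, rfl⟩ := hN hy
      have hm0 : m ≠ 0 := by
        rintro rfl
        exact F.irrefl hy
      have hmk : m < k := hm
      refine ⟨m - 1, ⟨by omega, ?_⟩, by show f (m - 1 + 1) = f m; rw [show m - 1 + 1 = m by omega]⟩
      have : m - 1 + 1 = m := by omega
      rw [this]
      exact hy
    · rintro ⟨i, ⟨hi1, hi2⟩, rfl⟩
      exact hi2
  have h2 : F'.neighborSet (f (k-1)) = f '' Iq := by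
    ext y
    constructor
    · intro hy
      obtain ⟨m, hm, rfl⟩ := hN' hy
      have hm0 : m ≠ k - 1 := by
        rintro rfl
        exact F'.irrefl hy
      have hmk : m ∈ Set.Iio k := hm
      exact ⟨m, ⟨by simp at hmk; omega, hy⟩, rfl⟩
    · rintro ⟨i, ⟨hi1, hi2⟩, rfl⟩
      exact hi2
  have e1 : (F.neighborSet (f 0)).ncard = Ip.ncard := by
    rw [h1]
    apply Set.ncard_image_of_injOn
    intro i hi i' hi' hii
    have := hf (show i + 1 ∈ Set.Iio k from hi.1) (show i' + 1 ∈ Set.Iio k from hi'.1) hii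
    omega
  have e2 : (F'.neighborSet (f (k-1))).ncard = Iq.ncard := by
    rw [h2]
    apply Set.ncard_image_of_injOn
    intro i hi i' hi' hii
    exact hf (show i ∈ Set.Iio k from by have := hi.1; simp; omega)
      (show i' ∈ Set.Iio k from by have := hi'.1; simp; omega) hii
  have hsub : Ip ∪ Iq ⊆ Set.Iio (k-1) := by
    rintro i (hi | hi) <;> · have := hi.1; simp; omega
  have hU : (Ip ∪ Iq).ncard ≤ k - 1 := by
    calc (Ip ∪ Iq).ncard ≤ (Set.Iio (k-1)).ncard := Set.ncard_le_ncard hsub (Set.toFinite _)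
    _ = k - 1 := by rw [Set.ncard_eq_toFinset_card']; simp
  have hsum := Set.ncard_union_add_ncard_inter Ip Iq
    (Set.Finite.subset (Set.finite_Iio (k-1)) (fun i hi => hsub (Or.inl hi)))
    (Set.Finite.subset (Set.finite_Iio (k-1)) (fun i hi => hsub (Or.inr hi)))
  have hIeq : Ip ∩ Iq = {i | i + 1 < k ∧ F.Adj (f 0) (f (i+1)) ∧ F'.Adj (f (k-1)) (f i)} := by
    ext i
    simp only [hIp, hIq, Set.mem_inter_iff, Set.mem_setOf_eq]
    tauto
  rw [← hIeq]
  omega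

variable {G : Fin n → SimpleGraph V} {u v : V}

lemma RB_append {k : ℕ} {f : ℕ → V} {c : ℕ → Fin n} (hP : RBPathCore G k f c)
    (hUV : RBUV u v k f) (hk : 2 ≤ k) {w : V} (hw : ∀ i, i < k → f i ≠ w)
    {a : Fin n} (ha : ∀ i, i < k - 1 → c i ≠ a) (hadjw : (G a).Adj (f (k-1)) w) :
    ∃ f' c', RBPathCore G (k+1) f' c' ∧ RBUV u v (k+1) f' := by
  obtain ⟨hf, hc, hadj⟩ := hP
  refine ⟨fun i => if i < k then f i else w, fun i => if i < k - 1 then c i else a, ⟨?_, ?_, ?_⟩, ?_⟩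
  · intro i1 h1 i2 h2 heq
    simp only [Set.mem_Iio] at h1 h2
    by_cases e1 : i1 < k <;> by_cases e2 : i2 < k <;>
      simp only [if_pos, if_neg, e1, e2, if_true, if_false] at heq
    · exact hf e1 e2 heq
    · exact absurd heq (hw i1 e1)
    · exact absurd heq.symm (hw i2 e2)
    · omega
  · intro i1 h1 i2 h2 heq
    simp only [Set.mem_Iio] at h1 h2
    have h1' : i1 < k + 1 - 1 := h1
    have h2' : i2 < k + 1 - 1 := h2
    by_cases e1 : i1 < k - 1 <;> by_cases e2 : i2 < k - 1 <;>
      simp only [if_pos, if_neg, e1, e2, if_true, if_false] at heq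
    · exact hc e1 e2 heq
    · exact absurd heq (ha i1 e1)
    · exact absurd heq.symm (ha i2 e2)
    · omega
  · intro i hi
    rcases Nat.lt_or_ge (i+1) k with h | h
    · have h0 : i < k := by omega
      have h1 : i < k - 1 := by omega
      simp only [if_pos h, if_pos h0, if_pos h1]
      exact hadj i h
    · have h2 : i + 1 = k := by omega
      have h0 : i < k := by omega
      have h1 : ¬ (i < k - 1) := by omega
      have h3 : ¬ (i + 1 < k) := by omega
      simp only [if_pos h0, if_neg h1, if_neg h3]
      have : i = k - 1 := by omega
      rw [this]
      exact hadjw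
  · obtain ⟨j, hj, hjuv⟩ := hUV
    refine ⟨j, by omega, ?_⟩
    have h0 : j < k := by omega
    have h1 : j + 1 < k := hj
    simp only [if_pos h0, if_pos h1]
    exact hjuv

lemma RB_prepend {k : ℕ} {f : ℕ → V} {c : ℕ → Fin n} (hP : RBPathCore G k f c)
    (hUV : RBUV u v k f) (hk : 2 ≤ k) {w : V} (hw : ∀ i, i < k → f i ≠ w)
    {a : Fin n} (ha : ∀ i, i < k - 1 → c i ≠ a) (hadjw : (G a).Adj w (f 0)) :
    ∃ f' c', RBPathCore G (k+1) f' c' ∧ RBUV u v (k+1) f' := by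
  obtain ⟨hf, hc, hadj⟩ := hP
  refine ⟨fun i => if i = 0 then w else f (i-1), fun i => if i = 0 then a else c (i-1),
    ⟨?_, ?_, ?_⟩, ?_⟩
  · intro i1 h1 i2 h2 heq
    simp only [Set.mem_Iio] at h1 h2
    by_cases e1 : i1 = 0 <;> by_cases e2 : i2 = 0 <;>
      simp only [if_pos, if_neg, e1, e2, if_true, if_false] at heq
    · omega
    · exact absurd heq.symm (hw (i2-1) (by omega))
    · exact absurd heq (hw (i1-1) (by omega))
    · have := hf (show i1 - 1 ∈ Set.Iio k by simp; omega)
        (show i2 - 1 ∈ Set.Iio k by simp; omega) heq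
      omega
  · intro i1 h1 i2 h2 heq
    simp only [Set.mem_Iio] at h1 h2
    by_cases e1 : i1 = 0 <;> by_cases e2 : i2 = 0 <;>
      simp only [if_pos, if_neg, e1, e2, if_true, if_false] at heq
    · omega
    · exact absurd heq.symm (ha (i2-1) (by omega))
    · exact absurd heq (ha (i1-1) (by omega))
    · have := hc (show i1 - 1 ∈ Set.Iio (k-1) by simp; omega)
        (show i2 - 1 ∈ Set.Iio (k-1) by simp; omega) heq
      omega
  · intro i hi
    by_cases e : i = 0
    · subst e
      simp only [if_pos rfl, if_neg (by omega : ¬ (0+1 = 0))]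
      exact hadjw
    · simp only [if_neg e, if_neg (by omega : ¬ (i+1 = 0))]
      have h1 : i - 1 + 1 = i := by omega
      have h2 : i + 1 - 1 = i := by omega
      rw [h2, ← h1]
      exact hadj (i-1) (by omega)
  · obtain ⟨j, hj, hjuv⟩ := hUV
    refine ⟨j+1, by omega, ?_⟩
    simp only [if_neg (by omega : ¬ (j+1 = 0)), if_neg (by omega : ¬ (j+1+1 = 0))]
    have h1 : j + 1 - 1 = j := by omega
    have h2 : j + 1 + 1 - 1 = j + 1 := by omega
    rw [h1, h2]
    exact hjuv

/-- vertices of the rotated cycle -/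
def rotG (f : ℕ → V) (k s : ℕ) : ℕ → V := fun m => if m ≤ s then f m else f (k + s - m)

/-- edge colors of the rotated cycle: edge `m` joins `rotG m` to `rotG (m+1)`
(closing edge `k-1` joins `rotG (k-1)` to `rotG 0`). -/
def rotD (c : ℕ → Fin n) (k s : ℕ) (p q : Fin n) : ℕ → Fin n := fun m =>
  if m < s then c m else if m = s then q else if m = k - 1 then p else c (k + s - m - 1)

variable {G : Fin n → SimpleGraph V} {u v : V}

lemma RB_rotate {k : ℕ} {f : ℕ → V} {c : ℕ → Fin n} (hP : RBPathCore G k f c)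
    {s : ℕ} (hs1 : 1 ≤ s) (hs2 : s + 3 ≤ k)
    {p q : Fin n} (hp : (G p).Adj (f 0) (f (s+1))) (hq : (G q).Adj (f (k-1)) (f s)) :
    Set.InjOn (rotG f k s) (Set.Iio k) ∧
    (∀ i, i + 1 < k → (G (rotD c k s p q i)).Adj (rotG f k s i) (rotG f k s (i+1))) ∧
    (G (rotD c k s p q (k-1))).Adj (rotG f k s (k-1)) (rotG f k s 0) ∧
    (∀ j, j + 1 < k → j ≠ s →
      s(rotG f k s (if j < s then j else k + s - j - 1),
        rotG f k s ((if j < s then j else k + s - j - 1) + 1)) = s(f j, f (j+1)) ∧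
      (if j < s then j else k + s - j - 1) + 1 < k ∧
      rotD c k s p q (if j < s then j else k + s - j - 1) = c j ∧
      (if j < s then j else k + s - j - 1) ≠ s) := by
  obtain ⟨hf, hc, hadj⟩ := hP
  constructor
  · -- injectivity of rotG
    intro m1 h1 m2 h2 heq
    simp only [Set.mem_Iio] at h1 h2
    unfold rotG at heq
    by_cases e1 : m1 ≤ s <;> by_cases e2 : m2 ≤ s <;>
      simp only [if_pos, if_neg, e1, e2, if_true, if_false] at heq
    · exact hf (show m1 ∈ Set.Iio k by simp; omega) (show m2 ∈ Set.Iio k by simp; omega) heq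
    · have := hf (show m1 ∈ Set.Iio k by simp; omega)
        (show k + s - m2 ∈ Set.Iio k by simp; omega) heq
      omega
    · have := hf (show k + s - m1 ∈ Set.Iio k by simp; omega)
        (show m2 ∈ Set.Iio k by simp; omega) heq
      omega
    · have := hf (show k + s - m1 ∈ Set.Iio k by simp; omega)
        (show k + s - m2 ∈ Set.Iio k by simp; omega) heq
      omega
  refine ⟨?_, ?_, ?_⟩
  · -- adjacency along the cycle (internal edges)
    intro i hi
    unfold rotG rotD
    rcases Nat.lt_or_ge i s with h | h
    · rw [if_pos h, if_pos (show i ≤ s by omega), if_pos (show i + 1 ≤ s by omega)]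
      exact hadj i (by omega)
    rcases Nat.eq_or_lt_of_le h with h' | h'
    · obtain rfl : i = s := h'.symm
      rw [if_neg (lt_irrefl i), if_pos rfl, if_pos (le_refl i),
        if_neg (show ¬ (i + 1 ≤ i) by omega), show k + i - (i+1) = k - 1 by omega]
      exact hq.symm
    · rw [if_neg (show ¬ i < s by omega), if_neg (show i ≠ s by omega),
        if_neg (show i ≠ k - 1 by omega), if_neg (show ¬ i ≤ s by omega),
        if_neg (show ¬ i + 1 ≤ s by omega), show k + s - (i+1) = k + s - i - 1 by omega]
      have := hadj (k + s - i - 1) (by omega)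
      rw [show k + s - i - 1 + 1 = k + s - i by omega] at this
      exact this.symm
  · -- closing edge: from rotG (k-1) = f (s+1) to rotG 0 = f 0, colored p
    unfold rotG rotD
    rw [if_neg (show ¬ (k-1) < s by omega), if_neg (show k - 1 ≠ s by omega),
      if_pos rfl, if_pos (show (0:ℕ) ≤ s by omega), if_neg (show ¬ (k - 1 ≤ s) by omega),
      show k + s - (k-1) = s + 1 by omega]
    exact hp.symm
  · -- transfer of old path edges
    intro j hj hjs
    rcases Nat.lt_or_ge j s with h | h
    · rw [if_pos h]
      refine ⟨?_, by omega, ?_, by omega⟩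
      · unfold rotG
        rw [if_pos (show j ≤ s by omega), if_pos (show j + 1 ≤ s by omega)]
      · unfold rotD
        rw [if_pos h]
    · have h' : s < j := by omega
      rw [if_neg (show ¬ j < s by omega)]
      have e1 : ¬ (k + s - j - 1 ≤ s) := by omega
      have e2 : ¬ (k + s - j - 1 + 1 ≤ s) := by omega
      have e3 : ¬ (k + s - j - 1 < s) := by omega
      have e4 : k + s - j - 1 ≠ s := by omega
      have e5 : k + s - j - 1 ≠ k - 1 := by omega
      refine ⟨?_, by omega, ?_, by omega⟩
      · unfold rotG
        rw [if_neg e1, if_neg e2, show k + s - (k + s - j - 1) = j + 1 by omega,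
          show k + s - (k + s - j - 1 + 1) = j by omega]
        exact Sym2.eq_swap
      · unfold rotD
        rw [if_neg e3, if_neg e4, if_neg e5, show k + s - (k + s - j - 1) - 1 = j by omega]

/-- value classification of rotD -/
lemma rotD_cases (c : ℕ → Fin n) {k s : ℕ} (hs1 : 1 ≤ s) (hs2 : s + 3 ≤ k) {m : ℕ} (hm : m < k) :
    (m = k - 1 ∧ rotD c k s p q m = p) ∨ (m = s ∧ rotD c k s p q m = q) ∨
    (∃ i, i < k - 1 ∧ i ≠ s ∧ rotD c k s p q m = c i ∧
      m = (if i < s then i else k + s - i - 1)) := by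
  unfold rotD
  rcases Nat.lt_or_ge m s with h | h
  · refine Or.inr (Or.inr ⟨m, by omega, by omega, by rw [if_pos h], by rw [if_pos h]⟩)
  rcases Nat.eq_or_lt_of_le h with h' | h'
  · exact Or.inr (Or.inl ⟨h'.symm, by rw [if_neg (show ¬ m < s by omega), if_pos h'.symm]⟩)
  by_cases h2 : m = k - 1
  · exact Or.inl ⟨h2, by
      rw [if_neg (show ¬ m < s by omega), if_neg (show m ≠ s by omega), if_pos h2]⟩
  · refine Or.inr (Or.inr ⟨k + s - m - 1, by omega, by omega, ?_, ?_⟩)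
    · rw [if_neg (show ¬ m < s by omega), if_neg (show m ≠ s by omega), if_neg h2]
    · rw [if_neg (show ¬ (k + s - m - 1 < s) by omega)]
      omega

lemma RB_rotD_inj {k s : ℕ} {c : ℕ → Fin n} {p q : Fin n}
    (hc : Set.InjOn c (Set.Iio (k-1))) (hs1 : 1 ≤ s) (hs2 : s + 3 ≤ k)
    (hpu : ∀ i, i < k - 1 → c i ≠ p) (hqu : ∀ i, i < k - 1 → c i ≠ q) (hpq : p ≠ q) :
    Set.InjOn (rotD c k s p q) (Set.Iio k) := by
  intro m1 h1 m2 h2 heq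
  simp only [Set.mem_Iio] at h1 h2
  rcases rotD_cases (p := p) (q := q) c hs1 hs2 h1 with ⟨e1, v1⟩ | ⟨e1, v1⟩ | ⟨i1, hi1, hi1s, v1, e1⟩ <;>
    rcases rotD_cases (p := p) (q := q) c hs1 hs2 h2 with ⟨e2, v2⟩ | ⟨e2, v2⟩ | ⟨i2, hi2, hi2s, v2, e2⟩ <;>
      rw [v1, v2] at heq
  · omega
  · exact absurd heq.symm hpq.symm
  · exact absurd heq.symm (hpu i2 hi2)
  · exact absurd heq hpq.symm
  · omega
  · exact absurd heq.symm (hqu i2 hi2)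
  · exact absurd heq (hpu i1 hi1)
  · exact absurd heq (hqu i1 hi1)
  · have h9 := hc (show i1 ∈ Set.Iio (k-1) by simpa using hi1)
      (show i2 ∈ Set.Iio (k-1) by simpa using hi2) heq
    subst h9
    omega

lemma RB_rotD_inj2 {k s : ℕ} {c : ℕ → Fin n} {p : Fin n}
    (hc : Set.InjOn c (Set.Iio (k-1))) (hs1 : 1 ≤ s) (hs2 : s + 3 ≤ k)
    (hpu : ∀ i, i < k - 1 → c i ≠ p) :
    Set.InjOn (rotD c k s p (c s)) (Set.Iio k) := by
  intro m1 h1 m2 h2 heq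
  simp only [Set.mem_Iio] at h1 h2
  rcases rotD_cases (p := p) (q := c s) c hs1 hs2 h1 with ⟨e1, v1⟩ | ⟨e1, v1⟩ | ⟨i1, hi1, hi1s, v1, e1⟩ <;>
    rcases rotD_cases (p := p) (q := c s) c hs1 hs2 h2 with ⟨e2, v2⟩ | ⟨e2, v2⟩ | ⟨i2, hi2, hi2s, v2, e2⟩ <;>
      rw [v1, v2] at heq
  · omega
  · exact absurd heq.symm (hpu s (by omega))
  · exact absurd heq.symm (hpu i2 hi2)
  · exact absurd heq (hpu s (by omega))
  · omega
  · have h9 := hc (show s ∈ Set.Iio (k-1) by simp; omega)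
      (show i2 ∈ Set.Iio (k-1) by simpa using hi2) heq
    omega
  · exact absurd heq (hpu i1 hi1)
  · have h9 := hc (show i1 ∈ Set.Iio (k-1) by simpa using hi1)
      (show s ∈ Set.Iio (k-1) by simp; omega) heq
    omega
  · have h9 := hc (show i1 ∈ Set.Iio (k-1) by simpa using hi1)
      (show i2 ∈ Set.Iio (k-1) by simpa using hi2) heq
    subst h9
    omega

/-- injectivity after recoloring the (moved) uv-edge at position j' with the freed color c s -/
lemma RB_rotD_inj3 {k s j : ℕ} {c : ℕ → Fin n} {p : Fin n}
    (hc : Set.InjOn c (Set.Iio (k-1))) (hs1 : 1 ≤ s) (hs2 : s + 3 ≤ k)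
    (hj : j + 1 < k) (hjs : j ≠ s)
    (hpu : ∀ i, i < k - 1 → c i ≠ p) :
    Set.InjOn (fun m => if m = (if j < s then j else k + s - j - 1) then c s
      else rotD c k s p (c j) m) (Set.Iio k) := by
  set j' := (if j < s then j else k + s - j - 1) with hj'
  have hj'1 : j' < k - 1 := by
    rcases Nat.lt_or_ge j s with h | h
    · rw [hj', if_pos h]; omega
    · rw [hj', if_neg (by omega)]; omega
  have hj's : j' ≠ s := by
    rcases Nat.lt_or_ge j s with h | h
    · rw [hj', if_pos h]; omega
    · rw [hj', if_neg (by omega)]; omega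
  intro m1 h1 m2 h2 heq
  simp only [Set.mem_Iio] at h1 h2
  simp only at heq
  by_cases e1 : m1 = j' <;> by_cases e2 : m2 = j' <;>
    simp only [if_pos, if_neg, e1, e2, if_true, if_false] at heq
  · omega
  · -- c s = rotD ... m2
    rcases rotD_cases (p := p) (q := c j) c hs1 hs2 h2 with ⟨f2, v2⟩ | ⟨f2, v2⟩ | ⟨i2, hi2, hi2s, v2, f2⟩ <;>
      rw [v2] at heq
    · exact absurd heq (hpu s (by omega))
    · have := hc (show s ∈ Set.Iio (k-1) by simp; omega)
        (show j ∈ Set.Iio (k-1) by simp; omega) heq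
      omega
    · have := hc (show s ∈ Set.Iio (k-1) by simp; omega)
        (show i2 ∈ Set.Iio (k-1) by simpa using hi2) heq
      have : i2 = s := by omega
      omega
  · rcases rotD_cases (p := p) (q := c j) c hs1 hs2 h1 with ⟨f1, v1⟩ | ⟨f1, v1⟩ | ⟨i1, hi1, hi1s, v1, f1⟩ <;>
      rw [v1] at heq
    · exact absurd heq.symm (hpu s (by omega))
    · have := hc (show j ∈ Set.Iio (k-1) by simp; omega)
        (show s ∈ Set.Iio (k-1) by simp; omega) heq
      omega
    · have := hc (show i1 ∈ Set.Iio (k-1) by simpa using hi1)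
        (show s ∈ Set.Iio (k-1) by simp; omega) heq
      omega
  · -- both plain rotD values
    rcases rotD_cases (p := p) (q := c j) c hs1 hs2 h1 with ⟨f1, v1⟩ | ⟨f1, v1⟩ | ⟨i1, hi1, hi1s, v1, f1⟩ <;>
      rcases rotD_cases (p := p) (q := c j) c hs1 hs2 h2 with ⟨f2, v2⟩ | ⟨f2, v2⟩ | ⟨i2, hi2, hi2s, v2, f2⟩ <;>
        rw [v1, v2] at heq
    · omega
    · exact absurd heq.symm (hpu j (by omega))
    · exact absurd heq.symm (hpu i2 hi2)
    · exact absurd heq (hpu j (by omega))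
    · omega
    · -- c j = c i2, m2 ≠ j' so i2 ≠ j, contradiction
      have := hc (show j ∈ Set.Iio (k-1) by simp; omega)
        (show i2 ∈ Set.Iio (k-1) by simpa using hi2) heq
      subst this
      -- m2 = position of j, i.e. j'
      exact absurd (f2.trans hj'.symm) e2
    · exact absurd heq (hpu i1 hi1)
    · have := hc (show i1 ∈ Set.Iio (k-1) by simpa using hi1)
        (show j ∈ Set.Iio (k-1) by simp; omega) heq
      subst this
      exact absurd (f1.trans hj'.symm) e1
    · have h9 := hc (show i1 ∈ Set.Iio (k-1) by simpa using hi1)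
        (show i2 ∈ Set.Iio (k-1) by simpa using hi2) heq
      subst h9
      omega

def opG (g : ℕ → V) (k δ : ℕ) : ℕ → V :=
  fun i => if i < k - δ - 1 then g (δ + 1 + i) else g (i - (k - δ - 1))

def opD (d : ℕ → Fin n) (k δ : ℕ) : ℕ → Fin n :=
  fun i => if i < k - δ - 1 then d (δ + 1 + i) else d (i - (k - δ - 1))

variable {G : Fin n → SimpleGraph V} {u v : V}

/-- Opening a rainbow cycle by deleting edge `δ` yields a rainbow path on the same
vertex set, preserving every other edge (with its color). -/
lemma RB_open {k : ℕ} {g : ℕ → V} {d : ℕ → Fin n} (hC : RBCycCore G k g d)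
    (hk : 2 ≤ k) {δ : ℕ} (hδ : δ < k) :
    RBPathCore G k (opG g k δ) (opD d k δ) ∧
    (∀ j, j + 1 < k → j ≠ δ →
      ∃ i, i + 1 < k ∧ s(opG g k δ i, opG g k δ (i+1)) = s(g j, g (j+1))) ∧
    (∀ i, i < k → ∃ m, m < k ∧ opG g k δ i = g m) ∧
    (∀ i, i < k → ∃ m, m < k ∧ opD d k δ i = d m) ∧
    opG g k δ (k-1) = g δ := by
  obtain ⟨hg, hd, hadj, hcl⟩ := hC
  have sbound : ∀ i, i < k → (if i < k - δ - 1 then δ + 1 + i else i - (k - δ - 1)) < k := by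
    intro i hi; split <;> omega
  refine ⟨⟨?_, ?_, ?_⟩, ?_, ?_, ?_, ?_⟩
  · intro m1 h1 m2 h2 heq
    simp only [Set.mem_Iio] at h1 h2
    unfold opG at heq
    by_cases e1 : m1 < k - δ - 1 <;> by_cases e2 : m2 < k - δ - 1 <;>
      simp only [if_pos, if_neg, e1, e2, if_true, if_false] at heq <;>
      [ have := hg (show δ + 1 + m1 ∈ Set.Iio k by simp; omega)
          (show δ + 1 + m2 ∈ Set.Iio k by simp; omega) heq;
        have := hg (show δ + 1 + m1 ∈ Set.Iio k by simp; omega)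
          (show m2 - (k - δ - 1) ∈ Set.Iio k by simp; omega) heq;
        have := hg (show m1 - (k - δ - 1) ∈ Set.Iio k by simp; omega)
          (show δ + 1 + m2 ∈ Set.Iio k by simp; omega) heq;
        have := hg (show m1 - (k - δ - 1) ∈ Set.Iio k by simp; omega)
          (show m2 - (k - δ - 1) ∈ Set.Iio k by simp; omega) heq ] <;> omega
  · intro m1 h1 m2 h2 heq
    simp only [Set.mem_Iio] at h1 h2
    unfold opD at heq
    by_cases e1 : m1 < k - δ - 1 <;> by_cases e2 : m2 < k - δ - 1 <;>
      simp only [if_pos, if_neg, e1, e2, if_true, if_false] at heq <;>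
      [ have := hd (show δ + 1 + m1 ∈ Set.Iio k by simp; omega)
          (show δ + 1 + m2 ∈ Set.Iio k by simp; omega) heq;
        have := hd (show δ + 1 + m1 ∈ Set.Iio k by simp; omega)
          (show m2 - (k - δ - 1) ∈ Set.Iio k by simp; omega) heq;
        have := hd (show m1 - (k - δ - 1) ∈ Set.Iio k by simp; omega)
          (show δ + 1 + m2 ∈ Set.Iio k by simp; omega) heq;
        have := hd (show m1 - (k - δ - 1) ∈ Set.Iio k by simp; omega)
          (show m2 - (k - δ - 1) ∈ Set.Iio k by simp; omega) heq ] <;> omega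
  · intro i hi
    unfold opG opD
    rcases Nat.lt_or_ge (i+1) (k - δ - 1) with h | h
    · rw [if_pos h, if_pos (show i < k - δ - 1 by omega), if_pos (show i < k - δ - 1 by omega),
        show δ + 1 + (i + 1) = δ + 1 + i + 1 by omega]
      exact hadj (δ + 1 + i) (by omega)
    rcases Nat.eq_or_lt_of_le h with h' | h'
    · -- i + 1 = k - δ - 1 : this edge is the closing edge of the cycle
      rw [if_pos (show i < k - δ - 1 by omega), if_pos (show i < k - δ - 1 by omega),
        if_neg (show ¬ i + 1 < k - δ - 1 by omega),
        show δ + 1 + i = k - 1 by omega, show i + 1 - (k - δ - 1) = 0 by omega]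
      exact hcl
    · rw [if_neg (show ¬ i + 1 < k - δ - 1 by omega), if_neg (show ¬ i < k - δ - 1 by omega),
        if_neg (show ¬ i < k - δ - 1 by omega),
        show i + 1 - (k - δ - 1) = i - (k - δ - 1) + 1 by omega]
      exact hadj (i - (k - δ - 1)) (by omega)
  · intro j hj hjδ
    rcases Nat.lt_or_ge δ j with h | h
    · refine ⟨j - δ - 1, by omega, ?_⟩
      unfold opG
      rw [if_pos (show j - δ - 1 < k - δ - 1 by omega),
        if_pos (show j - δ - 1 + 1 < k - δ - 1 by omega),
        show δ + 1 + (j - δ - 1) = j by omega, show δ + 1 + (j - δ - 1 + 1) = j + 1 by omega]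
    · have h' : j < δ := by omega
      refine ⟨j + (k - δ - 1), by omega, ?_⟩
      unfold opG
      rw [if_neg (show ¬ j + (k - δ - 1) < k - δ - 1 by omega),
        if_neg (show ¬ j + (k - δ - 1) + 1 < k - δ - 1 by omega),
        show j + (k - δ - 1) - (k - δ - 1) = j by omega,
        show j + (k - δ - 1) + 1 - (k - δ - 1) = j + 1 by omega]
  · intro i hi
    refine ⟨_, sbound i hi, ?_⟩
    unfold opG
    split <;> rfl
  · intro i hi
    refine ⟨_, sbound i hi, ?_⟩
    unfold opD
    split <;> rfl
  · unfold opG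
    rw [if_neg (show ¬ k - 1 < k - δ - 1 by omega), show k - 1 - (k - δ - 1) = δ by omega]

lemma RB_ex_tail {g : ℕ → V} (hg : Set.InjOn g (Set.Iio n)) (hn : 3 ≤ n) :
    ∀ r, r < n → ∃ p : (⊤ : SimpleGraph V).Walk (g (n-1-r)) (g 0),
      p.support = (List.range (r+1)).map (fun i => g (n-1-r+i)) ++ [g 0] ∧
      p.edges = (List.range (r+1)).map
        (fun i => s(g (n-1-r+i), if i = r then g 0 else g (n-r+i))) := by
  have hne : ∀ a b : ℕ, a < n → b < n → a ≠ b → g a ≠ g b := by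
    intro a b ha hb hab h
    exact hab (hg (Set.mem_Iio.2 ha) (Set.mem_Iio.2 hb) h)
  intro r
  induction r with
  | zero =>
    intro hr
    have hadj : (⊤ : SimpleGraph V).Adj (g (n-1-0)) (g 0) := by
      rw [top_adj]
      exact hne _ _ (by omega) (by omega) (by omega)
    refine ⟨Walk.cons hadj Walk.nil, ?_, ?_⟩
    · simp [List.range_succ]
    · simp [List.range_succ]
  | succ r ih =>
    intro hr
    obtain ⟨p, hs, he⟩ := ih (by omega)
    have hadj : (⊤ : SimpleGraph V).Adj (g (n-1-(r+1))) (g (n-1-r)) := by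
      rw [top_adj]
      exact hne _ _ (by omega) (by omega) (by omega)
    have key1 : (List.range (r+1+1)).map (fun i => g (n-1-(r+1)+i)) =
        g (n-1-(r+1)) :: (List.range (r+1)).map (fun i => g (n-1-r+i)) := by
      rw [List.range_succ_eq_map (n := r+1), List.map_cons, List.map_map]
      congr 1
      refine List.map_congr_left (fun i hi => ?_)
      simp only [List.mem_range] at hi
      simp only [Function.comp_apply, Nat.succ_eq_add_one]
      congr 1
      omega
    have key2 : (List.range (r+1+1)).map
          (fun i => s(g (n-1-(r+1)+i), if i = r+1 then g 0 else g (n-(r+1)+i))) =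
        s(g (n-1-(r+1)), g (n-1-r)) ::
          (List.range (r+1)).map (fun i => s(g (n-1-r+i), if i = r then g 0 else g (n-r+i))) := by
      rw [List.range_succ_eq_map (n := r+1), List.map_cons, List.map_map]
      congr 1
      · rw [if_neg (by omega : ¬ (0:ℕ) = r + 1), show n - (r+1) + 0 = n - 1 - r by omega]
        rfl
      refine List.map_congr_left (fun i hi => ?_)
      simp only [List.mem_range] at hi
      simp only [Function.comp_apply, Nat.succ_eq_add_one]
      by_cases h : i = r
      · subst h
        rw [if_pos (rfl : (i:ℕ) + 1 = i + 1), if_pos (rfl : (i:ℕ) = i),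
          show n - 1 - (i+1) + (i+1) = n - 1 - i + i by omega]
      · rw [if_neg h, if_neg (by omega : ¬ i + 1 = r + 1),
          show n - 1 - (r+1) + (i+1) = n - 1 - r + i by omega,
          show n - (r+1) + (i+1) = n - r + i by omega]
    refine ⟨Walk.cons hadj p, ?_, ?_⟩
    · rw [Walk.support_cons, hs, key1, List.cons_append]
    · rw [Walk.edges_cons, he, key2]


lemma RB_toHamCycle (hn : 3 ≤ n) (hV : Fintype.card V = n) {g : ℕ → V} {d : ℕ → Fin n}
    (hC : RBCycCore G n g d) : RainbowHamCycle G := by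
  obtain ⟨hg, hd, hadjC, hcl⟩ := hC
  have hne : ∀ a b : ℕ, a < n → b < n → a ≠ b → g a ≠ g b := by
    intro a b ha hb hab h
    exact hab (hg (Set.mem_Iio.2 ha) (Set.mem_Iio.2 hb) h)
  have hsurj : ∀ w : V, ∃ m, m < n ∧ g m = w := by
    intro w
    have himage : g '' Set.Iio n = Set.univ := by
      apply Set.eq_of_subset_of_ncard_le (Set.subset_univ _)
      rw [Set.ncard_univ, Nat.card_eq_fintype_card, hV, Set.ncard_image_of_injOn hg,
        Set.ncard_eq_toFinset_card']
      simp
    have : w ∈ g '' Set.Iio n := by rw [himage]; trivial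
    obtain ⟨m, hm, hgm⟩ := this
    exact ⟨m, Set.mem_Iio.1 hm, hgm⟩
  have h0 := RB_ex_tail hg hn (n-1) (by omega)
  rw [show n - 1 - (n-1) = 0 by omega] at h0
  obtain ⟨p, hs, he⟩ := h0
  rw [show n - 1 + 1 = n by omega] at hs he
  -- notation for the edge list
  set Efun : ℕ → Sym2 V := fun i => s(g i, if i = n - 1 then g 0 else g (n - (n-1) + i)) with hEfun
  have hEfun' : ∀ i, i < n → Efun i = s(g i, if i = n - 1 then g 0 else g (i+1)) := by
    intro i hi
    simp only [hEfun]
    by_cases h : i = n - 1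
    · rw [if_pos h, if_pos h]
    · rw [if_neg h, if_neg h, show n - (n-1) + i = i + 1 by omega]
  have he' : p.edges = (List.range n).map Efun := by
    rw [he]
    refine List.map_congr_left (fun i hi => ?_)
    simp only [List.mem_range] at hi
    simp only [hEfun]
    rw [show (0:ℕ) + i = i by omega]
  have hs' : p.support = (List.range n).map g ++ [g 0] := by
    rw [hs]
    congr 1
    refine List.map_congr_left (fun i hi => ?_)
    congr 1
    omega
  -- edges are pairwise distinct
  have hEinj : ∀ i, i < n → ∀ i', i' < n → Efun i = Efun i' → i = i' := by
    intro i hi i' hi' heq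
    rw [hEfun' i hi, hEfun' i' hi'] at heq
    rw [Sym2.eq_iff] at heq
    by_cases h : i = n - 1 <;> by_cases h' : i' = n - 1
    · omega
    · subst h
      rw [if_pos rfl, if_neg h'] at heq
      rcases heq with ⟨e1, e2⟩ | ⟨e1, e2⟩
      · have : n - 1 = i' := by
          by_contra hx
          exact hne (n-1) i' (by omega) hi' hx e1
        omega
      · have a1 : n - 1 = i' + 1 := by
          by_contra hx
          exact hne (n-1) (i'+1) (by omega) (by omega) hx e1
        have a2 : 0 = i' := by
          by_contra hx
          exact hne 0 i' (by omega) hi' hx e2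
        omega
    · subst h'
      rw [if_pos rfl, if_neg h] at heq
      rcases heq with ⟨e1, e2⟩ | ⟨e1, e2⟩
      · have : i = n - 1 := by
          by_contra hx
          exact hne i (n-1) hi (by omega) hx e1
        omega
      · have a1 : i = 0 := by
          by_contra hx
          exact hne i 0 hi (by omega) hx e1
        have a2 : i + 1 = n - 1 := by
          by_contra hx
          exact hne (i+1) (n-1) (by omega) (by omega) hx e2
        omega
    · rw [if_neg h, if_neg h'] at heq
      rcases heq with ⟨e1, e2⟩ | ⟨e1, e2⟩
      · by_contra hx
        exact hne i i' hi hi' hx e1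
      · have a1 : i = i' + 1 := by
          by_contra hx
          exact hne i (i'+1) hi (by omega) hx e1
        have a2 : i + 1 = i' := by
          by_contra hx
          exact hne (i+1) i' (by omega) hi' hx e2
        omega
  have hedges_nodup : p.edges.Nodup := by
    rw [he']
    refine List.Nodup.map_on ?_ List.nodup_range
    intro i hi i' hi' heq
    simp only [List.mem_range] at hi hi'
    exact hEinj i hi i' hi' heq
  have hpnil : p ≠ Walk.nil := by
    intro h
    rw [h] at hs'
    simp only [Walk.support_nil] at hs'
    have hlen := congrArg List.length hs'
    simp at hlen
    omega
  have htail : p.support.tail = (List.range (n-1)).map (fun i => g (i+1)) ++ [g 0] := by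
    rw [hs']
    conv_lhs => rw [show n = n - 1 + 1 by omega, List.range_succ_eq_map]
    simp only [List.map_cons, List.map_map, List.cons_append, List.tail_cons]
    rfl
  have htail_nodup : p.support.tail.Nodup := by
    rw [htail]
    rw [List.nodup_append]
    refine ⟨?_, List.nodup_singleton _, ?_⟩
    · refine List.Nodup.map_on ?_ List.nodup_range
      intro i hi i' hi' heq
      simp only [List.mem_range] at hi hi'
      have := hg (Set.mem_Iio.2 (show i + 1 < n by omega))
        (Set.mem_Iio.2 (show i' + 1 < n by omega)) heq
      omega
    · intro x hx
      simp only [List.mem_map, List.mem_range] at hx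
      obtain ⟨i, hi, rfl⟩ := hx
      simp only [List.mem_singleton]
      rintro b rfl
      exact hne (i+1) 0 (by omega) (by omega) (by omega)
  have hcyc : p.IsCycle := by
    rw [Walk.isCycle_def]
    exact ⟨⟨hedges_nodup⟩, hpnil, htail_nodup⟩
  have hham : p.IsHamiltonianCycle := by
    refine ⟨hcyc, ?_⟩
    intro w
    rw [Walk.support_tail_of_not_nil p hcyc.not_nil]
    apply List.count_eq_one_of_mem htail_nodup
    rw [htail]
    obtain ⟨m, hm, rfl⟩ := hsurj w
    rcases Nat.eq_or_lt_of_le (Nat.zero_le m) with h | h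
    · apply List.mem_append_right
      simp only [List.mem_singleton]
      congr 1
      omega
    · apply List.mem_append_left
      simp only [List.mem_map, List.mem_range]
      exact ⟨m - 1, by omega, by show g (m-1+1) = g m; rw [show m-1+1 = m by omega]⟩
  -- now the rainbow coloring
  classical
  have hmem : ∀ e, e ∈ p.edges ↔ ∃ i, i < n ∧ Efun i = e := by
    intro e
    rw [he']
    simp only [List.mem_map, List.mem_range]
  refine ⟨g 0, p, hham, ?_⟩
  refine ⟨fun e => if h : ∃ i, i < n ∧ Efun i = e then d h.choose else d 0, ?_, ?_⟩
  · intro e1 he1 e2 he2 heq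
    simp only [Set.mem_setOf_eq, hmem] at he1 he2
    dsimp only at heq
    rw [dif_pos he1, dif_pos he2] at heq
    obtain ⟨hi1, hE1⟩ := he1.choose_spec
    obtain ⟨hi2, hE2⟩ := he2.choose_spec
    have := hd (Set.mem_Iio.2 hi1) (Set.mem_Iio.2 hi2) heq
    rw [← hE1, ← hE2, this]
  · intro e heE
    simp only [Set.mem_setOf_eq, hmem] at heE
    dsimp only
    rw [dif_pos heE]
    obtain ⟨hi, hE⟩ := heE.choose_spec
    set i := heE.choose
    rw [← hE, hEfun' i hi]
    rw [SimpleGraph.mem_edgeSet]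
    by_cases h : i = n - 1
    · rw [if_pos h, h]
      exact hcl
    · rw [if_neg h]
      exact hadjC i (by omega)

lemma RB_reverse {k : ℕ} {f : ℕ → V} {c : ℕ → Fin n} (hk : 2 ≤ k)
    (hP : RBPathCore G k f c) (hUV : RBUV u v k f) :
    RBPathCore G k (fun i => f (k-1-i)) (fun i => c (k-2-i)) ∧
      RBUV u v k (fun i => f (k-1-i)) := by
  obtain ⟨hf, hc, hadjP⟩ := hP
  refine ⟨⟨?_, ?_, ?_⟩, ?_⟩
  · intro i1 h1 i2 h2 heq
    simp only [Set.mem_Iio] at h1 h2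
    have := hf (show k-1-i1 ∈ Set.Iio k by simp; omega) (show k-1-i2 ∈ Set.Iio k by simp; omega) heq
    omega
  · intro i1 h1 i2 h2 heq
    simp only [Set.mem_Iio] at h1 h2
    have := hc (show k-2-i1 ∈ Set.Iio (k-1) by simp; omega)
      (show k-2-i2 ∈ Set.Iio (k-1) by simp; omega) heq
    omega
  · intro i hi
    have h0 := hadjP (k-2-i) (by omega)
    rw [show k-2-i+1 = k-1-i by omega] at h0
    show (G (c (k-2-i))).Adj (f (k-1-i)) (f (k-1-(i+1)))
    rw [show k-1-(i+1) = k-2-i by omega]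
    exact h0.symm
  · obtain ⟨j, hj, hjuv⟩ := hUV
    refine ⟨k-2-j, by omega, ?_⟩
    show s(f (k-1-(k-2-j)), f (k-1-(k-2-j+1))) = s(u, v)
    rw [show k-1-(k-2-j) = j+1 by omega, show k-1-(k-2-j+1) = j by omega, Sym2.eq_swap]
    exact hjuv

lemma RB_step (hV : Fintype.card V = n) (hσ : ∀ i : Fin n, SigmaTwoGE (G i) n)
    (hadjuv : ∀ i : Fin n, (G i).Adj u v)
    {k : ℕ} (hk2 : 2 ≤ k) (hkn : k + 1 ≤ n) {f : ℕ → V} {c : ℕ → Fin n}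
    (hP : RBPathCore G k f c) (hUV : RBUV u v k f) :
    ∃ f' c', RBPathCore G (k+1) f' c' ∧ RBUV u v (k+1) f' := by
  obtain ⟨hf, hc, hadjP⟩ := hP
  by_cases hA : ∃ a : Fin n, (∀ i, i < k-1 → c i ≠ a) ∧ ∃ w, (∀ i, i < k → f i ≠ w) ∧
      ((G a).Adj (f (k-1)) w ∨ (G a).Adj w (f 0))
  · obtain ⟨a, ha, w, hw, hcase⟩ := hA
    rcases hcase with h | h
    · exact RB_append ⟨hf, hc, hadjP⟩ hUV hk2 hw ha h
    · exact RB_prepend ⟨hf, hc, hadjP⟩ hUV hk2 hw ha h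
  push_neg at hA
  -- all neighbors (in unused colors) of the endpoints lie on the path
  have hNsub : ∀ x : Fin n, (∀ i, i < k-1 → c i ≠ x) →
      (G x).neighborSet (f 0) ⊆ f '' Set.Iio k ∧
      (G x).neighborSet (f (k-1)) ⊆ f '' Set.Iio k := by
    intro x hx
    constructor
    · intro y hy
      by_contra hyim
      have hfresh : ∀ i, i < k → f i ≠ y := by
        intro i hi he
        exact hyim ⟨i, Set.mem_Iio.2 hi, he⟩
      have h9 := hA x hx y hfresh
      rw [SimpleGraph.mem_neighborSet] at hy
      exact h9.2 hy.symm
    · intro y hy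
      by_contra hyim
      have hfresh : ∀ i, i < k → f i ≠ y := by
        intro i hi he
        exact hyim ⟨i, Set.mem_Iio.2 hi, he⟩
      have h9 := hA x hx y hfresh
      rw [SimpleGraph.mem_neighborSet] at hy
      exact h9.1 hy
  obtain ⟨a, b, hab, hau, hbu⟩ := RB_unused2 c (show (k-1) + 2 ≤ n by omega)
  -- construct a rainbow cycle on the same vertex set, containing uv
  have hcyc : ∃ gg dd, RBCycCore G k gg dd ∧
      (∃ j', j' + 1 < k ∧ s(gg j', gg (j'+1)) = s(u,v)) := by
    by_cases hclose : ∃ x : Fin n, (∀ i, i < k-1 → c i ≠ x) ∧ (G x).Adj (f 0) (f (k-1))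
    · obtain ⟨x, hxu, hxadj⟩ := hclose
      refine ⟨f, fun m => if m = k-1 then x else c m, ⟨hf, ?_, ?_, ?_⟩, ?_⟩
      · intro m1 h1 m2 h2 heq
        simp only [Set.mem_Iio] at h1 h2
        by_cases e1 : m1 = k-1 <;> by_cases e2 : m2 = k-1 <;>
          simp only [if_pos, if_neg, e1, e2, if_true, if_false] at heq
        · omega
        · exact absurd heq.symm (hxu m2 (by omega))
        · exact absurd heq (hxu m1 (by omega))
        · exact hc (show m1 ∈ Set.Iio (k-1) by simp; omega)
            (show m2 ∈ Set.Iio (k-1) by simp; omega) heq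
      · intro i hi
        show (G (if i = k-1 then x else c i)).Adj (f i) (f (i+1))
        rw [if_neg (show i ≠ k-1 by omega)]
        exact hadjP i hi
      · show (G (if k-1 = k-1 then x else c (k-1))).Adj (f (k-1)) (f 0)
        rw [if_pos rfl]
        exact hxadj.symm
      · obtain ⟨j, hj, hjuv⟩ := hUV
        exact ⟨j, hj, hjuv⟩
    · push_neg at hclose
      have hne0k : f 0 ≠ f (k-1) := by
        intro h
        have := hf (show (0:ℕ) ∈ Set.Iio k by simp; omega)
          (show k-1 ∈ Set.Iio k by simp; omega) h
        omega
      have h1a : ¬ (G a).Adj (f 0) (f (k-1)) := hclose a hau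
      have h1b : ¬ (G b).Adj (f 0) (f (k-1)) := hclose b hbu
      have hda := hσ a hne0k h1a
      have hdb := hσ b hne0k h1b
      have horient : ∃ p q : Fin n, p ≠ q ∧ (∀ i, i < k-1 → c i ≠ p) ∧
          (∀ i, i < k-1 → c i ≠ q) ∧ ¬ (G p).Adj (f 0) (f (k-1)) ∧
          ¬ (G q).Adj (f 0) (f (k-1)) ∧
          n ≤ ((G p).neighborSet (f 0)).ncard + ((G q).neighborSet (f (k-1))).ncard := by
        rcases le_or_gt n (((G a).neighborSet (f 0)).ncard +
            ((G b).neighborSet (f (k-1))).ncard) with h | h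
        · exact ⟨a, b, hab, hau, hbu, h1a, h1b, h⟩
        · exact ⟨b, a, hab.symm, hbu, hau, h1b, h1a, by omega⟩
      obtain ⟨p, q, hpq, hpu, hqu, hpna, hqna, hdeg⟩ := horient
      have hcr := RB_cross hV hf hk2 ((hNsub p hpu).1) ((hNsub q hqu).2) hdeg
      have hI2 : 1 < ({i | i + 1 < k ∧ (G p).Adj (f 0) (f (i+1)) ∧
          (G q).Adj (f (k-1)) (f i)} : Set ℕ).ncard := by omega
      have hIfin : ({i | i + 1 < k ∧ (G p).Adj (f 0) (f (i+1)) ∧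
          (G q).Adj (f (k-1)) (f i)} : Set ℕ).Finite := by
        apply Set.Finite.subset (Set.finite_Iio k)
        intro i hi
        simp only [Set.mem_setOf_eq] at hi
        simp only [Set.mem_Iio]
        omega
      rw [Set.one_lt_ncard_iff hIfin] at hI2
      obtain ⟨s1, s2, hs1I, hs2I, hs12⟩ := hI2
      simp only [Set.mem_setOf_eq] at hs1I hs2I
      obtain ⟨j, hj, hjuv⟩ := hUV
      have hpick : ∃ s, (s + 1 < k ∧ (G p).Adj (f 0) (f (s+1)) ∧
          (G q).Adj (f (k-1)) (f s)) ∧ s ≠ j := by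
        by_cases h : s1 = j
        · exact ⟨s2, hs2I, by omega⟩
        · exact ⟨s1, hs1I, h⟩
      obtain ⟨s, ⟨hsk, hps, hqs⟩, hsj⟩ := hpick
      have hs1 : 1 ≤ s := by
        rcases Nat.eq_zero_or_pos s with h | h
        · subst h
          exact absurd hqs.symm hqna
        · exact h
      have hs2 : s + 3 ≤ k := by
        by_contra h
        have h9 : s = k - 2 := by omega
        subst h9
        rw [show k-2+1 = k-1 by omega] at hps
        exact hpna hps
      obtain ⟨hginj, hadjR, hclR, htransfer⟩ := RB_rotate ⟨hf, hc, hadjP⟩ hs1 hs2 hps hqs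
      have hdinj := RB_rotD_inj hc hs1 hs2 hpu hqu hpq
      obtain ⟨huvtrans, hj'k, hdj', hj's⟩ := htransfer j hj hsj.symm
      exact ⟨rotG f k s, rotD c k s p q, ⟨hginj, hdinj, hadjR, hclR⟩,
        (if j < s then j else k+s-j-1), hj'k, huvtrans.trans hjuv⟩
  clear hA
  obtain ⟨gg, dd, hCC, j', hj', hjuv'⟩ := hcyc
  obtain ⟨a', ha'⟩ := RB_unused1 dd (show k < n by omega)
  obtain ⟨w0, hw0⟩ := RB_fresh hV gg (show k < n by omega)
  have hSne : (gg '' Set.Iio k).Nonempty := ⟨gg 0, ⟨0, Set.mem_Iio.2 (by omega), rfl⟩⟩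
  have hScne : (gg '' Set.Iio k)ᶜ.Nonempty := by
    refine ⟨w0, ?_⟩
    intro hmem
    obtain ⟨m, hm, he⟩ := hmem
    exact hw0 m (Set.mem_Iio.1 hm) he
  obtain ⟨x, hxS, y, hyS, hxy⟩ := RB_crossing_edge hV (hσ a') hSne hScne
  obtain ⟨t, ht, rfl⟩ := hxS
  rw [Set.mem_Iio] at ht
  have hyfresh : ∀ m, m < k → gg m ≠ y := by
    intro m hm he
    exact hyS ⟨m, Set.mem_Iio.2 hm, he⟩
  by_cases hjt : j' = t
  · -- crossing vertex carries the uv edge: open at the other incident edge and prepend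
    by_cases ht0 : t = 0
    · -- open at δ = k-1 (the closing edge); path is gg itself, starting at gg 0 = gg t
      obtain ⟨hPC', htrans, himg, hcol, hend⟩ := RB_open hCC hk2 (show k-1 < k by omega)
      have hUV' : RBUV u v k (opG gg k (k-1)) := by
        obtain ⟨i, hi, he⟩ := htrans j' hj' (by omega)
        exact ⟨i, hi, he.trans hjuv'⟩
      have hyf' : ∀ i, i < k → opG gg k (k-1) i ≠ y := by
        intro i hi
        obtain ⟨m, hm, he⟩ := himg i hi
        rw [he]
        exact hyfresh m hm
      have ha'' : ∀ i, i < k-1 → opD dd k (k-1) i ≠ a' := by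
        intro i hi
        obtain ⟨m, hm, he⟩ := hcol i (by omega)
        rw [he]
        exact ha' m hm
      have hstart : opG gg k (k-1) 0 = gg t := by
        unfold opG
        rw [if_neg (show ¬ (0:ℕ) < k - (k-1) - 1 by omega),
          show (0:ℕ) - (k - (k-1) - 1) = 0 by omega, ht0]
      exact RB_prepend hPC' hUV' hk2 hyf' ha'' (by rw [hstart]; exact hxy.symm)
    · -- open at δ = t-1; path starts at gg t
      obtain ⟨hPC', htrans, himg, hcol, hend⟩ := RB_open hCC hk2 (show t-1 < k by omega)
      have hUV' : RBUV u v k (opG gg k (t-1)) := by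
        obtain ⟨i, hi, he⟩ := htrans j' hj' (by omega)
        exact ⟨i, hi, he.trans hjuv'⟩
      have hyf' : ∀ i, i < k → opG gg k (t-1) i ≠ y := by
        intro i hi
        obtain ⟨m, hm, he⟩ := himg i hi
        rw [he]
        exact hyfresh m hm
      have ha'' : ∀ i, i < k-1 → opD dd k (t-1) i ≠ a' := by
        intro i hi
        obtain ⟨m, hm, he⟩ := hcol i (by omega)
        rw [he]
        exact ha' m hm
      have hstart : opG gg k (t-1) 0 = gg t := by
        unfold opG
        rw [if_pos (show (0:ℕ) < k - (t-1) - 1 by omega), show t-1+1+0 = t by omega]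
      exact RB_prepend hPC' hUV' hk2 hyf' ha'' (by rw [hstart]; exact hxy.symm)
  · -- open at δ = t; path ends at gg t, append y
    obtain ⟨hPC', htrans, himg, hcol, hend⟩ := RB_open hCC hk2 ht
    have hUV' : RBUV u v k (opG gg k t) := by
      obtain ⟨i, hi, he⟩ := htrans j' hj' hjt
      exact ⟨i, hi, he.trans hjuv'⟩
    have hyf' : ∀ i, i < k → opG gg k t i ≠ y := by
      intro i hi
      obtain ⟨m, hm, he⟩ := himg i hi
      rw [he]
      exact hyfresh m hm
    have ha'' : ∀ i, i < k-1 → opD dd k t i ≠ a' := by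
      intro i hi
      obtain ⟨m, hm, he⟩ := hcol i (by omega)
      rw [he]
      exact ha' m hm
    exact RB_append hPC' hUV' hk2 hyf' ha'' (by rw [hend]; exact hxy)

lemma RB_image_univ (hV : Fintype.card V = n) {f : ℕ → V} (hf : Set.InjOn f (Set.Iio n)) :
    f '' Set.Iio n = Set.univ := by
  apply Set.eq_of_subset_of_ncard_le (Set.subset_univ _)
  rw [Set.ncard_univ, Nat.card_eq_fintype_card, hV, Set.ncard_image_of_injOn hf,
    Set.ncard_eq_toFinset_card']
  simp

lemma RB_final_key (hn : 3 ≤ n) (hV : Fintype.card V = n)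
    (hadjuv : ∀ i : Fin n, (G i).Adj u v)
    {f : ℕ → V} {c : ℕ → Fin n} (hf : Set.InjOn f (Set.Iio n))
    (hc : Set.InjOn c (Set.Iio (n-1)))
    (hadjP : ∀ i, i + 1 < n → (G (c i)).Adj (f i) (f (i+1)))
    {j : ℕ} (hj : j + 1 < n) (hjuv : s(f j, f (j+1)) = s(u,v))
    {a : Fin n} (hau : ∀ i, i < n-1 → c i ≠ a)
    (hna : ¬ (G a).Adj (f 0) (f (n-1))) (hnb : ¬ (G (c j)).Adj (f 0) (f (n-1)))
    (hdeg : n ≤ ((G a).neighborSet (f 0)).ncard + ((G (c j)).neighborSet (f (n-1))).ncard) :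
    RainbowHamCycle G := by
  have himage := RB_image_univ hV hf
  have hsub1 : (G a).neighborSet (f 0) ⊆ f '' Set.Iio n := by
    rw [himage]; exact Set.subset_univ _
  have hsub2 : (G (c j)).neighborSet (f (n-1)) ⊆ f '' Set.Iio n := by
    rw [himage]; exact Set.subset_univ _
  have hcr := RB_cross hV hf (by omega) hsub1 hsub2 hdeg
  have hIfin : ({i | i + 1 < n ∧ (G a).Adj (f 0) (f (i+1)) ∧
      (G (c j)).Adj (f (n-1)) (f i)} : Set ℕ).Finite := by
    apply Set.Finite.subset (Set.finite_Iio n)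
    intro i hi
    simp only [Set.mem_setOf_eq] at hi
    simp only [Set.mem_Iio]
    omega
  have hIne : ({i | i + 1 < n ∧ (G a).Adj (f 0) (f (i+1)) ∧
      (G (c j)).Adj (f (n-1)) (f i)} : Set ℕ).Nonempty := by
    rw [← Set.ncard_pos hIfin]
    omega
  obtain ⟨s, hsI⟩ := hIne
  simp only [Set.mem_setOf_eq] at hsI
  obtain ⟨hsk, hps, hqs⟩ := hsI
  have hs1 : 1 ≤ s := by
    rcases Nat.eq_zero_or_pos s with h | h
    · subst h
      exact absurd hqs.symm hnb
    · exact h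
  have hs2 : s + 3 ≤ n := by
    by_contra h
    have h9 : s = n - 2 := by omega
    subst h9
    rw [show n-2+1 = n-1 by omega] at hps
    exact hna hps
  obtain ⟨hginj, hadjR, hclR, htransfer⟩ := RB_rotate ⟨hf, hc, hadjP⟩ hs1 hs2 hps hqs
  by_cases hsj : s = j
  · subst hsj
    have hdinj := RB_rotD_inj2 hc hs1 hs2 hau
    exact RB_toHamCycle hn hV ⟨hginj, hdinj, hadjR, hclR⟩
  · obtain ⟨huvtrans, hj'k, hdj', hj's⟩ := htransfer j hj (fun h => hsj h.symm)
    have hdinj := RB_rotD_inj3 hc hs1 hs2 hj (fun h => hsj h.symm) hau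
    refine RB_toHamCycle hn hV (g := rotG f n s)
      (d := fun m => if m = (if j < s then j else n + s - j - 1) then c s
        else rotD c n s a (c j) m) ⟨hginj, hdinj, ?_, ?_⟩
    · intro i hi
      show (G (if i = (if j < s then j else n + s - j - 1) then c s
        else rotD c n s a (c j) i)).Adj (rotG f n s i) (rotG f n s (i+1))
      by_cases e : i = (if j < s then j else n + s - j - 1)
      · rw [if_pos e]
        subst e
        rw [← SimpleGraph.mem_edgeSet, huvtrans, hjuv, SimpleGraph.mem_edgeSet]
        exact hadjuv _
      · rw [if_neg e]
        exact hadjR i hi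
    · show (G (if n-1 = (if j < s then j else n + s - j - 1) then c s
        else rotD c n s a (c j) (n-1))).Adj (rotG f n s (n-1)) (rotG f n s 0)
      rw [if_neg (show n-1 ≠ (if j < s then j else n + s - j - 1) by omega)]
      exact hclR

lemma RB_final (hn : 3 ≤ n) (hV : Fintype.card V = n) (hσ : ∀ i : Fin n, SigmaTwoGE (G i) n)
    (hadjuv : ∀ i : Fin n, (G i).Adj u v)
    {f : ℕ → V} {c : ℕ → Fin n} (hP : RBPathCore G n f c) (hUV : RBUV u v n f) :
    RainbowHamCycle G := by
  obtain ⟨hf, hc, hadjP⟩ := hP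
  obtain ⟨j, hj, hjuv⟩ := hUV
  obtain ⟨a, hau⟩ := RB_unused1 c (show n-1 < n by omega)
  have hadjuvx : ∀ x : Fin n, (G x).Adj (f j) (f (j+1)) := by
    intro x
    rw [← SimpleGraph.mem_edgeSet, hjuv, SimpleGraph.mem_edgeSet]
    exact hadjuv x
  by_cases h1 : (G a).Adj (f 0) (f (n-1))
  · refine RB_toHamCycle hn hV (g := f) (d := fun m => if m = n-1 then a else c m)
      ⟨hf, ?_, ?_, ?_⟩
    · intro m1 hm1 m2 hm2 heq
      simp only [Set.mem_Iio] at hm1 hm2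
      by_cases e1 : m1 = n-1 <;> by_cases e2 : m2 = n-1 <;>
        simp only [if_pos, if_neg, e1, e2, if_true, if_false] at heq
      · omega
      · exact absurd heq.symm (hau m2 (by omega))
      · exact absurd heq (hau m1 (by omega))
      · exact hc (show m1 ∈ Set.Iio (n-1) by simp; omega)
          (show m2 ∈ Set.Iio (n-1) by simp; omega) heq
    · intro i hi
      show (G (if i = n-1 then a else c i)).Adj (f i) (f (i+1))
      rw [if_neg (show i ≠ n-1 by omega)]
      exact hadjP i hi
    · show (G (if n-1 = n-1 then a else c (n-1))).Adj (f (n-1)) (f 0)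
      rw [if_pos rfl]
      exact h1.symm
  by_cases h2 : (G (c j)).Adj (f 0) (f (n-1))
  · refine RB_toHamCycle hn hV (g := f)
      (d := fun m => if m = j then a else if m = n-1 then c j else c m) ⟨hf, ?_, ?_, ?_⟩
    · have hval : ∀ m, m < n → ((m = j ∧ (if m = j then a else if m = n-1 then c j else c m) = a)
          ∨ (m = n-1 ∧ (if m = j then a else if m = n-1 then c j else c m) = c j)
          ∨ (m ≠ j ∧ m < n-1 ∧ (if m = j then a else if m = n-1 then c j else c m) = c m)) := by
        intro m hm
        by_cases e : m = j
        · exact Or.inl ⟨e, by rw [if_pos e]⟩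
        by_cases e' : m = n-1
        · exact Or.inr (Or.inl ⟨e', by rw [if_neg e, if_pos e']⟩)
        · exact Or.inr (Or.inr ⟨e, by omega, by rw [if_neg e, if_neg e']⟩)
      intro m1 hm1 m2 hm2 heq0
      simp only [Set.mem_Iio] at hm1 hm2
      have heq : (if m1 = j then a else if m1 = n-1 then c j else c m1)
          = (if m2 = j then a else if m2 = n-1 then c j else c m2) := heq0
      clear heq0
      rcases hval m1 hm1 with ⟨e1, v1⟩ | ⟨e1, v1⟩ | ⟨e1, e1', v1⟩ <;>
        rcases hval m2 hm2 with ⟨e2, v2⟩ | ⟨e2, v2⟩ | ⟨e2, e2', v2⟩ <;>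
          rw [v1, v2] at heq
      · omega
      · exact absurd heq.symm (hau j (by omega))
      · exact absurd heq.symm (hau m2 e2')
      · exact absurd heq (hau j (by omega))
      · omega
      · have h9 := hc (show j ∈ Set.Iio (n-1) by simp; omega)
          (show m2 ∈ Set.Iio (n-1) by simp; omega) heq
        omega
      · exact absurd heq (hau m1 e1')
      · have h9 := hc (show m1 ∈ Set.Iio (n-1) by simp; omega)
          (show j ∈ Set.Iio (n-1) by simp; omega) heq
        omega
      · have h9 := hc (show m1 ∈ Set.Iio (n-1) by simp; omega)
          (show m2 ∈ Set.Iio (n-1) by simp; omega) heq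
        subst h9
        omega
    · intro i hi
      show (G (if i = j then a else if i = n-1 then c j else c i)).Adj (f i) (f (i+1))
      by_cases e : i = j
      · rw [if_pos e]
        subst e
        exact hadjuvx a
      · rw [if_neg e, if_neg (show i ≠ n-1 by omega)]
        exact hadjP i hi
    · show (G (if n-1 = j then a else if n-1 = n-1 then c j else c (n-1))).Adj (f (n-1)) (f 0)
      rw [if_neg (show n-1 ≠ j by omega), if_pos rfl]
      exact h2.symm
  · have hne0 : f 0 ≠ f (n-1) := by
      intro h
      have := hf (show (0:ℕ) ∈ Set.Iio n by simp; omega)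
        (show n-1 ∈ Set.Iio n by simp; omega) h
      omega
    have hda := hσ a hne0 h1
    have hdb := hσ (c j) hne0 h2
    rcases le_or_gt n (((G a).neighborSet (f 0)).ncard +
        ((G (c j)).neighborSet (f (n-1))).ncard) with hor | hor
    · exact RB_final_key hn hV hadjuv hf hc hadjP hj hjuv hau h1 h2 hor
    · -- use the reversed path
      obtain ⟨⟨hfR, hcR, hadjPR⟩, _⟩ := RB_reverse (u := u) (v := v) (by omega)
        ⟨hf, hc, hadjP⟩ ⟨j, hj, hjuv⟩
      have hidx : n - 2 - (n-2-j) = j := by omega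
      refine RB_final_key hn hV hadjuv hfR hcR hadjPR (j := n-2-j) (by omega) ?_
        (a := a) ?_ ?_ ?_ ?_
      · show s(f (n-1-(n-2-j)), f (n-1-(n-2-j+1))) = s(u,v)
        rw [show n-1-(n-2-j) = j+1 by omega, show n-1-(n-2-j+1) = j by omega, Sym2.eq_swap]
        exact hjuv
      · intro i hi
        show c (n-2-i) ≠ a
        exact hau (n-2-i) (by omega)
      · show ¬ (G a).Adj (f (n-1-0)) (f (n-1-(n-1)))
        rw [show n-1-0 = n-1 by omega, show n-1-(n-1) = 0 by omega]
        intro h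
        exact h1 h.symm
      · show ¬ (G (c (n-2-(n-2-j)))).Adj (f (n-1-0)) (f (n-1-(n-1)))
        rw [hidx, show n-1-0 = n-1 by omega, show n-1-(n-1) = 0 by omega]
        intro h
        exact h2 h.symm
      · show n ≤ ((G a).neighborSet (f (n-1-0))).ncard +
          ((G (c (n-2-(n-2-j)))).neighborSet (f (n-1-(n-1)))).ncard
        rw [hidx, show n-1-0 = n-1 by omega, show n-1-(n-1) = 0 by omega]
        omega

lemma RB_base (hn : 3 ≤ n) (huv : u ≠ v) (hadjuv : ∀ i : Fin n, (G i).Adj u v) :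
    ∃ f c, RBPathCore G 2 f c ∧ RBUV u v 2 f := by
  refine ⟨fun i => if i = 0 then u else v, fun _ => (⟨0, by omega⟩ : Fin n),
    ⟨?_, ?_, ?_⟩, 0, by omega, ?_⟩
  · intro i1 h1 i2 h2 heq
    simp only [Set.mem_Iio] at h1 h2
    by_cases e1 : i1 = 0 <;> by_cases e2 : i2 = 0 <;>
      simp only [if_pos, if_neg, e1, e2, if_true, if_false] at heq
    · omega
    · exact absurd heq huv
    · exact absurd heq.symm huv
    · omega
  · intro i1 h1 i2 h2 _
    simp only [Set.mem_Iio] at h1 h2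
    omega
  · intro i hi
    have h9 : i = 0 := by omega
    subst h9
    show (G _).Adj (if (0:ℕ) = 0 then u else v) (if (0:ℕ)+1 = 0 then u else v)
    rw [if_pos rfl, if_neg (by omega : ¬ (0:ℕ)+1 = 0)]
    exact hadjuv _
  · show s(if (0:ℕ) = 0 then u else v, if (0:ℕ)+1 = 0 then u else v) = s(u,v)
    rw [if_pos rfl, if_neg (by omega : ¬ (0:ℕ)+1 = 0)]

end RBAux

/-- under the rainbow Ore condition, a common edge yields a rainbow
Hamiltonian cycle. -/
theorem rainbow_ham_cycle_of_common_edge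
    {V : Type*} [Fintype V] [DecidableEq V] {n : ℕ} (hn : 3 ≤ n)
    (hV : Fintype.card V = n) (G : Fin n → SimpleGraph V)
    (hσ : ∀ i : Fin n, SigmaTwoGE (G i) n)
    (u v : V) (huv : u ≠ v) (hadj : ∀ i : Fin n, (G i).Adj u v) :
    RainbowHamCycle G := by
  have grow : ∀ m : ℕ, 2 + m ≤ n → ∃ f c, RBPathCore G (2 + m) f c ∧ RBUV u v (2 + m) f := by
    intro m
    induction m with
    | zero =>
      intro _
      exact RB_base hn huv hadj
    | succ m ih =>
      intro hle
      obtain ⟨f, c, hP, hUV⟩ := ih (by omega)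
      obtain ⟨f', c', hP', hUV'⟩ := RB_step hV hσ hadj (by omega) (by omega) hP hUV
      exact ⟨f', c', hP', hUV'⟩
  have h2n : 2 + (n - 2) = n := by omega
  obtain ⟨f, c, hP, hUV⟩ := grow (n-2) (by omega)
  rw [h2n] at hP hUV
  exact RB_final hn hV hσ hadj hP hUV
end

section
/- Let k ≥ 0 and n be integers and let F be a graph on n vertices such that d_F(x) + d_F(y) ≥ n + k for every pair of distinct non-adjacent vertices x, y of F. Let D ⊆ V(F) with |D| = k + 2, and suppose there is a partition V(F) ∖ D = X ∪ Y with |X| ≥ 1 and |Y| ≥ 1 such that the induced subgraph of F on V(F) ∖ D is exactly the disjoint union of the complete graph on X and the complete graph on Y (that is, within V(F) ∖ D, all pairs inside X are edges, all pairs inside Y are edges, and there are no edges between X and Y). Then every vertex of D is adjacent in F to every vertex of V(F) ∖ D. -/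
open SimpleGraph

lemma aux_dominates
    {V : Type*} [Fintype V] {n k : ℕ} (hV : Fintype.card V = n) (F : SimpleGraph V)
    (hσ : SigmaTwoGE F (n + k)) (D : Set V) (hD : D.ncard = k + 2)
    (X Y : Set V) (hpart : X ∪ Y = Dᶜ) (hdisj : Disjoint X Y)
    (hY : Y.Nonempty)
    (hXY : ∀ x ∈ X, ∀ y ∈ Y, ¬ F.Adj x y) :
    ∀ w ∈ X, D ⊆ F.neighborSet w := by
  intro w hw
  obtain ⟨y, hy⟩ := hY
  have hwy : w ≠ y := fun h => hdisj.ne_of_mem hw hy h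
  have hnadj : ¬F.Adj w y := hXY w hw y hy
  have h1 := hσ hwy hnadj
  -- neighborSet bounds
  have hNw : F.neighborSet w ⊆ (X \ {w}) ∪ (D ∩ F.neighborSet w) := by
    intro z hz
    by_cases hzD : z ∈ D
    · exact Or.inr ⟨hzD, hz⟩
    · have hzc : z ∈ X ∪ Y := hpart ▸ hzD
      rcases hzc with hzX | hzY
      · exact Or.inl ⟨hzX, fun h => F.loopless.irrefl w (h ▸ hz)⟩
      · exact absurd (hz : F.Adj w z) (hXY w hw z hzY)
  have hNy : F.neighborSet y ⊆ (Y \ {y}) ∪ D := by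
    intro z hz
    by_cases hzD : z ∈ D
    · exact Or.inr hzD
    · have hzc : z ∈ X ∪ Y := hpart ▸ hzD
      rcases hzc with hzX | hzY
      · exact absurd ((hz : F.Adj y z).symm) (hXY z hzX y hy)
      · exact Or.inl ⟨hzY, fun h => F.loopless.irrefl y (h ▸ hz)⟩
  have cw : (F.neighborSet w).ncard ≤ (X \ {w}).ncard + (D ∩ F.neighborSet w).ncard :=
    le_trans (Set.ncard_le_ncard hNw (Set.toFinite _)) (Set.ncard_union_le _ _)
  have cy : (F.neighborSet y).ncard ≤ (Y \ {y}).ncard + D.ncard :=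
    le_trans (Set.ncard_le_ncard hNy (Set.toFinite _)) (Set.ncard_union_le _ _)
  have hXw : (X \ {w}).ncard = X.ncard - 1 := Set.ncard_diff_singleton_of_mem hw
  have hYy : (Y \ {y}).ncard = Y.ncard - 1 := Set.ncard_diff_singleton_of_mem hy
  have hXpos : 0 < X.ncard := (Set.ncard_pos (Set.toFinite _)).2 ⟨w, hw⟩
  have hYpos : 0 < Y.ncard := (Set.ncard_pos (Set.toFinite _)).2 ⟨y, hy⟩
  have hsum : X.ncard + Y.ncard + D.ncard = n := by
    have h2 : (X ∪ Y).ncard = X.ncard + Y.ncard := Set.ncard_union_eq hdisj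
    have h3 : D.ncard + Dᶜ.ncard = Nat.card V := Set.ncard_add_ncard_compl D
    rw [hpart] at h2
    rw [Nat.card_eq_fintype_card, hV] at h3
    omega
  have hDge : D.ncard ≤ (D ∩ F.neighborSet w).ncard := by omega
  have heq : D ∩ F.neighborSet w = D :=
    Set.eq_of_subset_of_ncard_le Set.inter_subset_left hDge (Set.toFinite _)
  intro d hd
  rw [← heq] at hd
  exact hd.2

/-- Case 2 of the proof: if the Ore bound is `n + k`, `|D| = k + 2`, and
`V ∖ D` induces exactly a disjoint union of two nonempty cliques `X` and `Y`, then every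
vertex of `D` dominates `V ∖ D`. -/
theorem dominating_of_deleted_set_two_cliques
    {V : Type*} [Fintype V] {n k : ℕ} (hV : Fintype.card V = n) (F : SimpleGraph V)
    (hσ : SigmaTwoGE F (n + k)) (D : Set V) (hD : D.ncard = k + 2)
    (X Y : Set V) (hpart : X ∪ Y = Dᶜ) (hdisj : Disjoint X Y)
    (hX : X.Nonempty) (hY : Y.Nonempty)
    (hXclique : ∀ x ∈ X, ∀ y ∈ X, x ≠ y → F.Adj x y)
    (hYclique : ∀ x ∈ Y, ∀ y ∈ Y, x ≠ y → F.Adj x y)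
    (hXY : ∀ x ∈ X, ∀ y ∈ Y, ¬ F.Adj x y) :
    ∀ d ∈ D, ∀ w ∉ D, F.Adj d w := by
  intro d hd w hwD
  have hwc : w ∈ X ∪ Y := hpart ▸ hwD
  rcases hwc with hwX | hwY
  · exact ((aux_dominates hV F hσ D hD X Y hpart hdisj hY hXY w hwX hd) : F.Adj w d).symm
  · have hpart' : Y ∪ X = Dᶜ := (Set.union_comm Y X).trans hpart
    have hXY' : ∀ y ∈ Y, ∀ x ∈ X, ¬ F.Adj y x := fun y hy x hx h => hXY x hx y hy h.symm
    exact ((aux_dominates hV F hσ D hD Y X hpart' hdisj.symm hX hXY' w hwY hd) : F.Adj w d).symm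
end

section
/- Fix integers k ≥ 0, q ≥ 0 and n with k ≤ (n − 4)/3. Let G = (G_1, …, G_n) be a collection of n graphs on a common vertex set V with |V| = n such that σ₂(G_i) ≥ n + k for all i ∈ {1, …, n}. Let H be a rainbow linear forest in G with exactly k edges and injective coloring c : E(H) → {1, …, n}, whose components are H_u, H_v (containing the vertices u and v, respectively, as endpoints; these components may be single vertices) together with H_1, …, H_q, where each H_j (j ∈ {1, …, q}) has at least one edge. Suppose P* is a rainbow path of G with vertex set exactly V ∖ (V(H_u) ∪ V(H_v)) such that each H_j (j ∈ {1, …, q}) is a subpath of P* whose edges receive the same colors as under c, and every edge of P* not belonging to H receives a color in {1, …, n} ∖ c(E(H)). Then there exists a rainbow path P_0 of G with vertex set exactly V(P*) ∪ V(H_u) such that u is an endpoint of P_0, each of H_1, …, H_q and H_u is a subpath of P_0 whose edges receive the same colors as under c, and every edge of P_0 not belonging to H receives a color in {1, …, n} ∖ c(E(H)). -/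
open SimpleGraph

namespace RainbowAux

set_option linter.unusedSectionVars false

variable {V : Type*} [DecidableEq V]

/-- The list of consecutive edges of a list of vertices. -/
def zipE (l : List V) : List (Sym2 V) := l.zipWith (fun x y => s(x, y)) l.tail

@[simp] lemma zipE_nil : zipE ([] : List V) = [] := rfl

@[simp] lemma zipE_single (x : V) : zipE [x] = [] := rfl

@[simp] lemma zipE_cons₂ (x y : V) (l : List V) :
    zipE (x :: y :: l) = s(x, y) :: zipE (y :: l) := rfl

lemma zipE_cons (x : V) (l : List V) (h : l ≠ []) :
    zipE (x :: l) = s(x, l.head h) :: zipE l := by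
  cases l with
  | nil => simp at h
  | cons y t => rfl

lemma length_zipE (x : V) (l : List V) : (zipE (x :: l)).length + 1 = (x :: l).length := by
  simp [zipE, List.length_zipWith]

lemma length_zipE' (l : List V) (h : l ≠ []) : (zipE l).length + 1 = l.length := by
  cases l with
  | nil => simp at h
  | cons x t => exact length_zipE x t

lemma mem_zipE_iff {l : List V} {e : Sym2 V} :
    e ∈ zipE l ↔ ∃ i : ℕ, ∃ h : i + 1 < l.length,
      e = s(l[i]'(by omega), l[i + 1]'h) := by
  induction l with
  | nil => simp [zipE]
  | cons x t ih =>
    cases t with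
    | nil => simp [zipE]
    | cons y t' =>
      rw [zipE_cons₂, List.mem_cons, ih]
      constructor
      · rintro (rfl | ⟨i, h, rfl⟩)
        · refine ⟨0, by simp, rfl⟩
        · exact ⟨i + 1, by simp only [List.length_cons] at h ⊢; omega, rfl⟩
      · rintro ⟨i, h, rfl⟩
        cases i with
        | zero => left; rfl
        | succ i =>
          right
          refine ⟨i, by simp only [List.length_cons] at h ⊢; omega, rfl⟩

lemma mem_of_mem_zipE {l : List V} {e : Sym2 V} (he : e ∈ zipE l) :
    ∀ x ∈ e, x ∈ l := by
  rw [mem_zipE_iff] at he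
  obtain ⟨i, h, rfl⟩ := he
  intro x hx
  rw [Sym2.mem_iff] at hx
  rcases hx with rfl | rfl <;> exact List.getElem_mem _

lemma zipE_append (l₁ l₂ : List V) (h₁ : l₁ ≠ []) (h₂ : l₂ ≠ []) :
    zipE (l₁ ++ l₂) = zipE l₁ ++ s(l₁.getLast h₁, l₂.head h₂) :: zipE l₂ := by
  induction l₁ with
  | nil => simp at h₁
  | cons x t ih =>
    cases t with
    | nil =>
      cases l₂ with
      | nil => simp at h₂
      | cons y t' => simp [zipE_cons₂]
    | cons y t' =>
      have key := ih (by simp)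
      have hcons : (x :: y :: t') ++ l₂ = x :: ((y :: t') ++ l₂) := by simp
      rw [hcons]
      have hne : (y :: t') ++ l₂ ≠ [] := by simp
      rw [zipE_cons x _ hne, key]
      have hhead : ((y :: t') ++ l₂).head hne = y := by simp
      rw [hhead]
      have hlast : (x :: y :: t').getLast h₁ = (y :: t').getLast (by simp) := by
        simp [List.getLast_cons]
      rw [hlast]
      simp [zipE_cons₂]

lemma zipE_reverse (l : List V) : zipE l.reverse = (zipE l).reverse := by
  induction l with
  | nil => rfl
  | cons x t ih =>
    cases t with
    | nil => rfl
    | cons y t' =>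
      have hne : (y :: t').reverse ≠ [] := by simp
      rw [zipE_cons₂, List.reverse_cons]
      rw [zipE_append _ [x] hne (by simp)]
      rw [ih]
      simp [Sym2.eq_swap]

lemma nodup_zipE {l : List V} (hl : l.Nodup) : (zipE l).Nodup := by
  induction l with
  | nil => simp
  | cons x t ih =>
    cases t with
    | nil => simp
    | cons y t' =>
      rw [zipE_cons₂]
      refine List.Nodup.cons ?_ (ih hl.of_cons)
      intro hmem
      have := mem_of_mem_zipE hmem x (by simp)
      exact (List.nodup_cons.mp hl).1 this

lemma zipE_pos_unique {l : List V} (hl : l.Nodup) {i j : ℕ}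
    (hi : i + 1 < l.length) (hj : j + 1 < l.length)
    (hij : s(l[i]'(by omega), l[i + 1]'hi) = s(l[j]'(by omega), l[j + 1]'hj)) :
    i = j := by
  have hinj : ∀ (a b : Fin l.length), l[(a:ℕ)]'a.2 = l[(b:ℕ)]'b.2 → (a : ℕ) = (b : ℕ) := by
    intro a b hab
    have : l.get a = l.get b := by simpa [List.get_eq_getElem] using hab
    have := (List.Nodup.get_inj_iff hl).mp this
    exact congrArg Fin.val this
  rw [Sym2.eq_iff] at hij
  rcases hij with ⟨h1, h2⟩ | ⟨h1, h2⟩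
  · exact hinj ⟨i, by omega⟩ ⟨j, by omega⟩ h1
  · have e1 := hinj ⟨i, by omega⟩ ⟨j + 1, hj⟩ h1
    have e2 := hinj ⟨i + 1, hi⟩ ⟨j, by omega⟩ h2
    simp at e1 e2
    omega

lemma head_support {G : SimpleGraph V} {a b : V} (q : G.Walk a b) :
    ∀ h, q.support.head h = a := by
  intro h; cases q <;> rfl

lemma last_support {G : SimpleGraph V} {a b : V} (q : G.Walk a b) :
    ∀ h, q.support.getLast h = b := by
  induction q with
  | nil => intro h; rfl
  | @cons x y z hadj q ih =>
    intro h
    show (x :: q.support).getLast (by simp) = z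
    rw [List.getLast_cons (SimpleGraph.Walk.support_ne_nil q)]
    exact ih _

lemma walk_edges_eq_zipE {G : SimpleGraph V} {a b : V} (p : G.Walk a b) :
    p.edges = zipE p.support := by
  induction p with
  | nil => rfl
  | @cons u x y h q ih =>
    rw [SimpleGraph.Walk.edges_cons, SimpleGraph.Walk.support_cons, ih,
      zipE_cons _ _ (SimpleGraph.Walk.support_ne_nil q), head_support q]

lemma exists_walk_of_list (l : List V) (hl : l.Nodup) (hne : l ≠ []) :
    ∃ (b : V) (wk : (⊤ : SimpleGraph V).Walk (l.head hne) b),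
      wk.IsPath ∧ wk.support = l := by
  induction l with
  | nil => simp at hne
  | cons x t ih =>
    cases t with
    | nil =>
      exact ⟨x, SimpleGraph.Walk.nil, by simp, by simp⟩
    | cons y t' =>
      obtain ⟨b, wk, hwk, hsupp⟩ := ih hl.of_cons (by simp)
      have hxy : (⊤ : SimpleGraph V).Adj x ((y :: t').head (by simp)) := by
        simp only [List.head_cons, SimpleGraph.top_adj]
        intro h; subst h; exact (List.nodup_cons.mp hl).1 (by simp)
      refine ⟨b, SimpleGraph.Walk.cons hxy wk, ?_, ?_⟩
      · refine (SimpleGraph.Walk.cons_isPath_iff hxy wk).mpr ?_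
        refine ⟨hwk, ?_⟩
        rw [hsupp]
        exact (List.nodup_cons.mp hl).1
      · refine (SimpleGraph.Walk.support_cons hxy wk).trans ?_
        rw [hsupp]

lemma head_eq_of_eq_cons {l r : List V} {x : V} (h : l = x :: r) (hne : l ≠ []) :
    l.head hne = x := by subst h; rfl

lemma getLast_eq_of_concat {l r : List V} {x : V} (h : l = r ++ [x]) (hne : l ≠ []) :
    l.getLast hne = x := by subst h; exact List.getLast_append _

lemma exists_walk_of_list' (l : List V) (hl : l.Nodup) (u : V) (hne : l ≠ [])
    (hhead : l.head hne = u) :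
    ∃ (b : V) (wk : (⊤ : SimpleGraph V).Walk u b), wk.IsPath ∧ wk.support = l := by
  subst hhead
  exact exists_walk_of_list l hl hne

end RainbowAux

namespace RainbowAux
variable {V : Type*} [DecidableEq V]
open SimpleGraph
lemma reachable_eq_of_isolated {H : SimpleGraph V} {u x : V}
    (hiso : H.neighborSet u = ∅) (h : H.Reachable u x) : x = u := by
  obtain ⟨wk⟩ := h
  cases wk with
  | nil => rfl
  | @cons _ y _ h q =>
    have hmem : y ∈ H.neighborSet u := h
    rw [hiso] at hmem
    exact hmem.elim

lemma isAcyclic_anti {H' H : SimpleGraph V} (hle : H' ≤ H) (hac : H.IsAcyclic) :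
    H'.IsAcyclic := by
  intro v cyc hcyc
  have hedges : ∀ e ∈ cyc.edges, e ∈ H.edgeSet := fun e he =>
    edgeSet_mono hle (cyc.edges_subset_edgeSet he)
  exact hac (cyc.transfer H hedges) (hcyc.transfer hedges)

lemma exists_comp_list [Fintype V] (H : SimpleGraph V) (hac : H.IsAcyclic)
    (hdeg : ∀ x, (H.neighborSet x).ncard ≤ 2) (u : V) (hu : (H.neighborSet u).ncard ≤ 1) :
    ∃ L : List V, ∃ hne : L ≠ [], L.head hne = u ∧ L.Nodup ∧
      (∀ x, x ∈ L ↔ H.Reachable u x) ∧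
      (∀ e, e ∈ zipE L ↔ e ∈ H.edgeSet ∧ ∃ x ∈ e, H.Reachable u x) := by
  suffices aux : ∀ (N : ℕ) (H : SimpleGraph V), H.edgeSet.ncard ≤ N → H.IsAcyclic →
      (∀ x, (H.neighborSet x).ncard ≤ 2) → ∀ u, (H.neighborSet u).ncard ≤ 1 →
      ∃ L : List V, ∃ hne : L ≠ [], L.head hne = u ∧ L.Nodup ∧
      (∀ x, x ∈ L ↔ H.Reachable u x) ∧
      (∀ e, e ∈ zipE L ↔ e ∈ H.edgeSet ∧ ∃ x ∈ e, H.Reachable u x) by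
    exact aux H.edgeSet.ncard H le_rfl hac hdeg u hu
  intro N
  induction N with
  | zero =>
    intro H hcard hac hdeg u hu
    have hempty : H.neighborSet u = ∅ := by
      by_contra hne
      obtain ⟨y, hy⟩ := Set.nonempty_iff_ne_empty.mpr hne
      have : s(u, y) ∈ H.edgeSet := (mem_neighborSet H u y).mp hy
      have h0 : H.edgeSet.ncard = 0 := le_antisymm hcard (Nat.zero_le _)
      have hemp := (Set.ncard_eq_zero (Set.toFinite _)).mp h0
      rw [hemp] at this
      exact this
    refine ⟨[u], by simp, rfl, by simp, ?_, ?_⟩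
    · intro x
      simp only [List.mem_singleton]
      constructor
      · rintro rfl; exact Reachable.refl _
      · intro h; exact reachable_eq_of_isolated hempty h
    · intro e
      constructor
      · intro h; exact absurd h (by simp [zipE])
      · rintro ⟨heH, x, hxe, hreach⟩
        exfalso
        -- H has no edges at all
        have h0 : H.edgeSet.ncard = 0 := le_antisymm hcard (Nat.zero_le _)
        have hemp := (Set.ncard_eq_zero (Set.toFinite _)).mp h0
        rw [hemp] at heH
        exact heH
  | succ N ih =>
    intro H hcard hac hdeg u hu
    by_cases hempty : H.neighborSet u = ∅
    · -- isolated vertex: same as base case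
      refine ⟨[u], by simp, rfl, by simp, ?_, ?_⟩
      · intro x
        simp only [List.mem_singleton]
        constructor
        · rintro rfl; exact Reachable.refl _
        · intro h; exact reachable_eq_of_isolated hempty h
      · intro e
        constructor
        · intro h; exact absurd h (by simp [zipE])
        · rintro ⟨heH, x, hxe, hreach⟩
          exfalso
          induction' e with y z
          rw [Sym2.mem_iff] at hxe
          -- some endpoint of e is reachable from u; follow the walk: u has a neighbor unless e doesn't exist
          have hxu : x = u := reachable_eq_of_isolated hempty hreach
          rcases hxe with rfl | rfl
          · have : z ∈ H.neighborSet x := (H.mem_edgeSet).mp heH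
            rw [hxu, hempty] at this; exact this
          · have : y ∈ H.neighborSet x := H.mem_edgeSet.mp (Sym2.eq_swap ▸ heH)
            rw [hxu, hempty] at this; exact this
    · obtain ⟨u₁, hu₁⟩ := Set.nonempty_iff_ne_empty.mpr hempty
      have hadj : H.Adj u u₁ := hu₁
      have hne_uu₁ : u ≠ u₁ := hadj.ne
      have hsingle : H.neighborSet u = {u₁} := by
        apply Set.eq_singleton_iff_unique_mem.mpr
        refine ⟨hu₁, fun y hy => ?_⟩
        exact (Set.ncard_le_one_iff (Set.toFinite _)).mp hu hy hu₁
      set H' := H.deleteEdges {s(u, u₁)} with hH'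
      have hH'le : H' ≤ H := deleteEdges_le _
      have hH'edge : H'.edgeSet = H.edgeSet \ {s(u, u₁)} := edgeSet_deleteEdges _
      have hmem : s(u, u₁) ∈ H.edgeSet := hadj
      have hcard' : H'.edgeSet.ncard ≤ N := by
        rw [hH'edge]
        have := Set.ncard_diff_singleton_lt_of_mem hmem (Set.toFinite _)
        omega
      have hac' : H'.IsAcyclic := isAcyclic_anti hH'le hac
      have hdeg' : ∀ x, (H'.neighborSet x).ncard ≤ 2 := fun x =>
        le_trans (Set.ncard_le_ncard (fun y hy => hH'le hy) (Set.toFinite _)) (hdeg x)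
      have hisoU : H'.neighborSet u = ∅ := by
        ext y
        simp only [mem_neighborSet, Set.mem_empty_iff_false, iff_false]
        intro hy
        rw [hH', deleteEdges_adj] at hy
        have : y = u₁ := by
          have := hy.1
          have hyn : y ∈ H.neighborSet u := this
          rw [hsingle] at hyn; exact hyn
        exact hy.2 (by rw [this]; exact Set.mem_singleton _)
      have hnbr' : H'.neighborSet u₁ = H.neighborSet u₁ \ {u} := by
        ext y
        simp only [mem_neighborSet, Set.mem_diff, Set.mem_singleton_iff]
        rw [hH', deleteEdges_adj]
        constructor
        · rintro ⟨h1, h2⟩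
          refine ⟨h1, fun hyu => h2 ?_⟩
          subst hyu
          rw [Sym2.eq_swap]
          exact Set.mem_singleton _
        · rintro ⟨h1, h2⟩
          refine ⟨h1, fun hs => ?_⟩
          rw [Set.mem_singleton_iff, Sym2.eq_iff] at hs
          rcases hs with ⟨h3, h4⟩ | ⟨h3, h4⟩
          · exact hne_uu₁ h3.symm
          · exact h2 h4
      have hu₁' : (H'.neighborSet u₁).ncard ≤ 1 := by
        rw [hnbr']
        have hmemu : u ∈ H.neighborSet u₁ := hadj.symm
        have := Set.ncard_diff_singleton_lt_of_mem hmemu (Set.toFinite _)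
        have h2 := hdeg u₁
        omega
      -- reachability transfer
      have hreach_iff : ∀ x, H'.Reachable u₁ x ↔ (H.Reachable u x ∧ x ≠ u) := by
        intro x
        constructor
        · intro h
          constructor
          · exact (hadj.reachable).trans (h.mono hH'le)
          · rintro rfl
            have := reachable_eq_of_isolated hisoU h.symm
            exact hne_uu₁ this.symm
        · rintro ⟨hr, hxu⟩
          obtain ⟨wk0⟩ := hr
          obtain ⟨pw, hpw⟩ : ∃ w : H.Walk u x, w.IsPath := ⟨wk0.toPath.val, wk0.toPath.prop⟩
          cases pw with
          | nil => exact absurd rfl hxu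
          | @cons _ y _ h q =>
            have hy : y = u₁ := by
              have : y ∈ H.neighborSet u := h
              rw [hsingle] at this; exact this
            subst hy
            have hqpath : q.IsPath ∧ u ∉ q.support := by
              rw [Walk.cons_isPath_iff] at hpw; exact hpw
            have hedges : ∀ e ∈ q.edges, e ∈ H'.edgeSet := by
              intro e he
              rw [hH'edge]
              refine ⟨q.edges_subset_edgeSet he, ?_⟩
              intro hcontra
              rw [Set.mem_singleton_iff] at hcontra
              subst hcontra
              exact hqpath.2 (q.fst_mem_support_of_mem_edges he)
            exact ⟨q.transfer H' hedges⟩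
      obtain ⟨L', hne', hhead', hnodup', hmem', hedge'⟩ := ih H' hcard' hac' hdeg' u₁ hu₁'
      refine ⟨u :: L', by simp, by simp, ?_, ?_, ?_⟩
      · rw [List.nodup_cons]
        refine ⟨?_, hnodup'⟩
        intro hmemu
        have := (hmem' u).mp hmemu
        exact ((hreach_iff u).mp this).2 rfl
      · intro x
        simp only [List.mem_cons]
        rw [hmem' x, hreach_iff x]
        constructor
        · rintro (rfl | ⟨h1, h2⟩)
          · exact Reachable.refl _
          · exact h1
        · intro h
          by_cases hx : x = u
          · left; exact hx
          · right; exact ⟨h, hx⟩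
      · intro e
        rw [zipE_cons u L' hne', List.mem_cons, hhead', hedge' e]
        constructor
        · rintro (rfl | ⟨h1, x, hx, h2⟩)
          · exact ⟨hmem, u, by simp, Reachable.refl u⟩
          · exact ⟨edgeSet_mono hH'le h1, x, hx, ((hreach_iff x).mp h2).1⟩
        · rintro ⟨heH, x, hx, hreach⟩
          by_cases hcase : e = s(u, u₁)
          · left; exact hcase
          · right
            have heH' : e ∈ H'.edgeSet := by
              rw [hH'edge]; exact ⟨heH, hcase⟩
            refine ⟨heH', ?_⟩
            -- find an endpoint ≠ u
            have hxu : x ≠ u := by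
              rintro rfl
              -- x = u ∈ e means e = s(u, u₁)
              induction' e with y z
              rw [Sym2.mem_iff] at hx
              apply hcase
              rcases hx with rfl | rfl
              · have : z ∈ H.neighborSet x := H.mem_edgeSet.mp heH
                rw [hsingle] at this
                rw [this]
              · have : y ∈ H.neighborSet x := H.mem_edgeSet.mp (Sym2.eq_swap ▸ heH)
                rw [hsingle] at this
                rw [this, Sym2.eq_swap]
            exact ⟨x, hx, (hreach_iff x).mpr ⟨hreach, hxu⟩⟩

end RainbowAux

namespace RainbowAux
open SimpleGraph
variable {V : Type*} [DecidableEq V]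
lemma build [Fintype V] {n : ℕ}
    (G : Fin n → SimpleGraph V) (H : SimpleGraph V)
    (c cP : Sym2 V → Fin n) (hc : RainbowColoring G H.edgeSet c)
    (u : V)
    {a b : V} (p : (⊤ : SimpleGraph V).Walk a b)
    (hcP : RainbowColoring G {e | e ∈ p.edges} cP)
    (hPH : ∀ e ∈ p.edges, e ∉ H.edgeSet → ∀ e' ∈ H.edgeSet, cP e ≠ c e')
    (Lu : List V) (hLune : Lu ≠ []) (hLuhead : Lu.head hLune = u) (hLunodup : Lu.Nodup)
    (hLumem : ∀ x, x ∈ Lu ↔ H.Reachable u x)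
    (hLuedge : ∀ e, e ∈ zipE Lu ↔ e ∈ H.edgeSet ∧ ∃ x ∈ e, H.Reachable u x)
    (hdisj : ∀ x ∈ p.support, ¬ H.Reachable u x)
    (hHcross : ∀ e ∈ H.edgeSet, (∃ x ∈ e, x ∈ p.support) → e ∈ p.edges)
    (g1 g2 : Fin n) (hg12 : g1 ≠ g2)
    (hg1H : ∀ e ∈ H.edgeSet, g1 ≠ c e) (hg2H : ∀ e ∈ H.edgeSet, g2 ≠ c e)
    (hg1P : ∀ e ∈ p.edges, g1 ≠ cP e) (hg2P : ∀ e ∈ p.edges, g2 ≠ cP e)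
    (M : List V) (hMne : M ≠ []) (hMnodup : M.Nodup)
    (hMmem : ∀ x, x ∈ M ↔ x ∈ p.support)
    (hadj : (G g1).Adj (Lu.getLast hLune) (M.head hMne))
    (hnew : ∀ e ∈ zipE M, e ∉ p.edges → e ∈ (G g2).edgeSet ∧ e ∉ H.edgeSet)
    (hone : ∀ e ∈ zipE M, ∀ e' ∈ zipE M, e ∉ p.edges → e' ∉ p.edges → e = e')
    (hcover : ∀ e ∈ p.edges, e ∈ H.edgeSet → e ∈ zipE M) :
    ∃ (b' : V) (p₀ : (⊤ : SimpleGraph V).Walk u b') (c₀ : Sym2 V → Fin n),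
      p₀.IsPath ∧
      {x | x ∈ p₀.support} = {x | x ∈ p.support} ∪ {x | H.Reachable u x} ∧
      RainbowColoring G {e | e ∈ p₀.edges} c₀ ∧
      (∀ e ∈ H.edgeSet,
        ((∃ x ∈ e, x ∈ p.support) ∨ (∃ x ∈ e, H.Reachable u x)) → e ∈ p₀.edges) ∧
      (∀ e ∈ p₀.edges, e ∈ H.edgeSet → c₀ e = c e) ∧
      (∀ e ∈ p₀.edges, e ∉ H.edgeSet → ∀ e' ∈ H.edgeSet, c₀ e ≠ c e') := by
  classical
  set w := Lu.getLast hLune with hw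
  set EN : Sym2 V := s(w, M.head hMne) with hEN
  set L₀ := Lu ++ M with hL₀
  have hne₀ : L₀ ≠ [] := by simp [hL₀, hLune]
  have hdisjLM : Lu.Disjoint M := by
    intro x hxl hxm
    exact hdisj x ((hMmem x).mp hxm) ((hLumem x).mp hxl)
  have hnodup₀ : L₀.Nodup := List.Nodup.append hLunodup hMnodup hdisjLM
  have hhead₀ : L₀.head hne₀ = u :=
    (List.head_append_of_ne_nil hLune).trans hLuhead
  obtain ⟨b', p₀, hp₀, hsupp₀⟩ := exists_walk_of_list' L₀ hnodup₀ u hne₀ hhead₀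
  have hedges₀ : p₀.edges = zipE Lu ++ EN :: zipE M := by
    rw [walk_edges_eq_zipE p₀, hsupp₀, hL₀, zipE_append Lu M hLune hMne]
  have hmem₀ : ∀ e, e ∈ p₀.edges ↔ (e ∈ zipE Lu ∨ e = EN ∨ e ∈ zipE M) := by
    intro e; rw [hedges₀]; simp
  have hwLu : w ∈ Lu := List.getLast_mem hLune
  have hwreach : H.Reachable u w := (hLumem w).mp hwLu
  have hMheadp : M.head hMne ∈ p.support := (hMmem _).mp (List.head_mem hMne)
  have hENnotH : EN ∉ H.edgeSet := by
    intro hmem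
    have hadjH : H.Adj w (M.head hMne) := hmem
    exact hdisj _ hMheadp (hwreach.trans hadjH.reachable)
  have hENnotp : EN ∉ p.edges := by
    intro hmem
    have : w ∈ p.support := p.fst_mem_support_of_mem_edges hmem
    exact hdisj w this hwreach
  have hLuH : ∀ e ∈ zipE Lu, e ∈ H.edgeSet := fun e he => ((hLuedge e).mp he).1
  set c₀ : Sym2 V → Fin n := fun e =>
    if e ∈ H.edgeSet then c e else if e ∈ p.edges then cP e
    else if e = EN then g1 else g2 with hc₀
  -- key classification of edges of p₀
  have key : ∀ e ∈ p₀.edges,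
      (e ∈ H.edgeSet ∧ c₀ e = c e) ∨
      (e ∉ H.edgeSet ∧ e ∈ p.edges ∧ c₀ e = cP e) ∨
      (e ∉ H.edgeSet ∧ e ∉ p.edges ∧ e = EN ∧ c₀ e = g1) ∨
      (e ∉ H.edgeSet ∧ e ∉ p.edges ∧ e ≠ EN ∧ e ∈ zipE M ∧ c₀ e = g2) := by
    intro e he
    by_cases h1 : e ∈ H.edgeSet
    · left; exact ⟨h1, by rw [hc₀]; simp [h1]⟩
    by_cases h2 : e ∈ p.edges
    · right; left; exact ⟨h1, h2, by rw [hc₀]; simp [h1, h2]⟩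
    by_cases h3 : e = EN
    · right; right; left; exact ⟨h1, h2, h3, by rw [hc₀]; simp only [h3]; simp [hENnotH, hENnotp]⟩
    · right; right; right
      refine ⟨h1, h2, h3, ?_, by rw [hc₀]; simp [h1, h2, h3]⟩
      rcases (hmem₀ e).mp he with hLu | hEN | hM
      · exact absurd (hLuH e hLu) h1
      · exact absurd hEN h3
      · exact hM
  refine ⟨b', p₀, c₀, hp₀, ?_, ⟨?_, ?_⟩, ?_, ?_, ?_⟩
  · -- support
    ext x
    simp only [Set.mem_setOf_eq, Set.mem_union, hsupp₀, hL₀, List.mem_append]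
    rw [hLumem x, hMmem x]
    tauto
  · -- injectivity
    intro e₁ h₁ e₂ h₂ hcc
    simp only [Set.mem_setOf_eq] at h₁ h₂
    rcases key e₁ h₁ with ⟨m1, v1⟩ | ⟨m1, m1', v1⟩ | ⟨m1, m1', m1'', v1⟩ | ⟨m1, m1', m1'', m1''', v1⟩ <;>
      rcases key e₂ h₂ with ⟨m2, v2⟩ | ⟨m2, m2', v2⟩ | ⟨m2, m2', m2'', v2⟩ | ⟨m2, m2', m2'', m2''', v2⟩ <;>
      rw [v1, v2] at hcc
    · exact hc.1 m1 m2 hcc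
    · exact absurd hcc.symm (hPH e₂ m2' m2 e₁ m1)
    · exact absurd hcc.symm (hg1H e₁ m1)
    · exact absurd hcc.symm (hg2H e₁ m1)
    · exact absurd hcc (hPH e₁ m1' m1 e₂ m2)
    · exact hcP.1 m1' m2' hcc
    · exact absurd hcc.symm (hg1P e₁ m1')
    · exact absurd hcc.symm (hg2P e₁ m1')
    · exact absurd hcc (hg1H e₂ m2)
    · exact absurd hcc (hg1P e₂ m2')
    · rw [m1'', m2'']
    · exact absurd hcc hg12
    · exact absurd hcc (hg2H e₂ m2)
    · exact absurd hcc (hg2P e₂ m2')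
    · exact absurd hcc.symm hg12
    · exact hone e₁ m1''' e₂ m2''' m1' m2'
  · -- colors give membership
    intro e he
    simp only [Set.mem_setOf_eq] at he
    rcases key e he with ⟨m1, v1⟩ | ⟨m1, m1', v1⟩ | ⟨m1, m1', m1'', v1⟩ | ⟨m1, m1', m1'', m1''', v1⟩
    · rw [v1]; exact hc.2 e m1
    · rw [v1]; exact hcP.2 e m1'
    · rw [v1, m1'']; exact hadj
    · rw [v1]; exact (hnew e m1''' m1').1
  · -- containment of forced H-edges
    intro e heH hcase
    rw [hmem₀]
    rcases hcase with ⟨x, hxe, hxp⟩ | ⟨x, hxe, hxr⟩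
    · have hep : e ∈ p.edges := hHcross e heH ⟨x, hxe, hxp⟩
      right; right
      exact hcover e hep heH
    · left
      exact (hLuedge e).mpr ⟨heH, x, hxe, hxr⟩
  · -- agreement on H-edges
    intro e _ heH
    rw [hc₀]; simp [heH]
  · -- freshness off H
    intro e he heH e' he'
    rcases key e he with ⟨m1, _⟩ | ⟨m1, m1', v1⟩ | ⟨m1, m1', m1'', v1⟩ | ⟨m1, m1', m1'', m1''', v1⟩
    · exact absurd m1 heH
    · rw [v1]; exact hPH e m1' m1 e' he'
    · rw [v1]; exact hg1H e' he'
    · rw [v1]; exact hg2H e' he'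

end RainbowAux

open RainbowAux in
/-- Claim 2 of the proof of Theorem `mainthm2`: attaching the component
`H_u` to an end of the rainbow path `P*`.  The component of a vertex `w` in `H` is encoded via
`H.Reachable w ·`; `V(H_u) = {w | H.Reachable u w}` and `V(H_v) = {w | H.Reachable v w}`. -/
theorem attach_u_component_to_rainbow_path
    {V : Type*} [Fintype V] [DecidableEq V] {n k q : ℕ}
    (hk : 3 * k + 4 ≤ n) (hV : Fintype.card V = n)
    (G : Fin n → SimpleGraph V) (hσ : ∀ i : Fin n, SigmaTwoGE (G i) (n + k))
    (H : SimpleGraph V) (hH : IsLinearForest H) (hHk : H.edgeSet.ncard = k)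
    (c : Sym2 V → Fin n) (hc : RainbowColoring G H.edgeSet c)
    (u v : V) (hu : (H.neighborSet u).ncard ≤ 1) (hv : (H.neighborSet v).ncard ≤ 1)
    (huv : ¬ H.Reachable u v)
    (vj : Fin q → V)
    (hvjend : ∀ j, (H.neighborSet (vj j)).ncard = 1)
    (hvju : ∀ j, ¬ H.Reachable u (vj j)) (hvjv : ∀ j, ¬ H.Reachable v (vj j))
    (hvjdist : ∀ j j', j ≠ j' → ¬ H.Reachable (vj j) (vj j'))
    (hcomp : ∀ w ∈ H.support,
      H.Reachable u w ∨ H.Reachable v w ∨ ∃ j, H.Reachable (vj j) w)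
    -- the rainbow path `P*` with vertex set exactly `V ∖ (V(H_u) ∪ V(H_v))`
    (a b : V) (p : (⊤ : SimpleGraph V).Walk a b) (hp : p.IsPath)
    (hpsupp : {w | w ∈ p.support} = ({w | H.Reachable u w} ∪ {w | H.Reachable v w})ᶜ)
    (cP : Sym2 V → Fin n) (hcP : RainbowColoring G {e | e ∈ p.edges} cP)
    (hPabsorb : ∀ e ∈ H.edgeSet, (∃ j, ∃ x ∈ e, H.Reachable (vj j) x) → e ∈ p.edges)
    (hPagree : ∀ e ∈ p.edges, e ∈ H.edgeSet → cP e = c e)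
    (hPH : ∀ e ∈ p.edges, e ∉ H.edgeSet → ∀ e' ∈ H.edgeSet, cP e ≠ c e') :
    -- conclusion: the rainbow path `P₀` starting at `u`
    ∃ (b' : V) (p₀ : (⊤ : SimpleGraph V).Walk u b') (c₀ : Sym2 V → Fin n),
      p₀.IsPath ∧
      {w | w ∈ p₀.support} = {w | w ∈ p.support} ∪ {w | H.Reachable u w} ∧
      RainbowColoring G {e | e ∈ p₀.edges} c₀ ∧
      (∀ e ∈ H.edgeSet,
        ((∃ j, ∃ x ∈ e, H.Reachable (vj j) x) ∨ (∃ x ∈ e, H.Reachable u x)) → e ∈ p₀.edges) ∧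
      (∀ e ∈ p₀.edges, e ∈ H.edgeSet → c₀ e = c e) ∧
      (∀ e ∈ p₀.edges, e ∉ H.edgeSet → ∀ e' ∈ H.edgeSet, c₀ e ≠ c e') := by
  classical
  obtain ⟨hac, hdeg⟩ := hH
  obtain ⟨Lu, hLune, hLuhead, hLunodup, hLumem, hLuedge⟩ :=
    exists_comp_list H hac hdeg u hu
  obtain ⟨Lv, hLvne, hLvhead, hLvnodup, hLvmem, hLvedge⟩ :=
    exists_comp_list H hac hdeg v hv
  have hpsne : p.support ≠ [] := p.support_ne_nil
  have hpsnodup : p.support.Nodup := hp.support_nodup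
  have hpedges : p.edges = zipE p.support := walk_edges_eq_zipE p
  have hplen : p.support.length = p.length + 1 := p.length_support
  have hps_iff : ∀ x, x ∈ p.support ↔ ¬(H.Reachable u x ∨ H.Reachable v x) := by
    intro x
    have h := Set.ext_iff.mp hpsupp x
    simpa using h
  have hdisju : ∀ x ∈ p.support, ¬ H.Reachable u x :=
    fun x hx hr => ((hps_iff x).mp hx) (Or.inl hr)
  have hdisjv : ∀ x ∈ p.support, ¬ H.Reachable v x :=
    fun x hx hr => ((hps_iff x).mp hx) (Or.inr hr)
  have hHcross : ∀ e ∈ H.edgeSet, (∃ x ∈ e, x ∈ p.support) → e ∈ p.edges := by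
    intro e
    induction e using Sym2.ind with
    | _ s t =>
      rintro he ⟨x, hxe, hxp⟩
      have hadj : H.Adj s t := he
      have hxsupp : x ∈ H.support := by
        rw [Sym2.mem_iff] at hxe
        rcases hxe with rfl | rfl
        · exact ⟨t, hadj⟩
        · exact ⟨s, hadj.symm⟩
      rcases hcomp x hxsupp with h | h | ⟨j, hj⟩
      · exact absurd h (hdisju x hxp)
      · exact absurd h (hdisjv x hxp)
      · exact hPabsorb _ he ⟨j, x, hxe, hj⟩
  have hcompdisj : ∀ e ∈ H.edgeSet, (∃ x ∈ e, H.Reachable u x) →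
      (∃ x ∈ e, H.Reachable v x) → False := by
    intro e
    induction e using Sym2.ind with
    | _ s t =>
      rintro he ⟨x, hx, hrx⟩ ⟨y, hy, hry⟩
      have hadj : H.Adj s t := he
      have hru : H.Reachable u s := by
        rw [Sym2.mem_iff] at hx
        rcases hx with rfl | rfl
        · exact hrx
        · exact hrx.trans hadj.symm.reachable
      have hrv : H.Reachable v s := by
        rw [Sym2.mem_iff] at hy
        rcases hy with rfl | rfl
        · exact hry
        · exact hry.trans hadj.symm.reachable
      exact huv (hru.trans hrv.symm)
  have hedge_supp : ∀ e ∈ p.edges, ∀ x ∈ e, x ∈ p.support := by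
    intro e
    induction e using Sym2.ind with
    | _ s t =>
      intro hep x hx
      rw [Sym2.mem_iff] at hx
      rcases hx with rfl | rfl
      · exact p.fst_mem_support_of_mem_edges hep
      · exact p.snd_mem_support_of_mem_edges hep
  have hmemsupp : ∀ e ∈ p.edges, ∃ x ∈ e, x ∈ p.support := by
    intro e
    induction e using Sym2.ind with
    | _ s t =>
      intro hep
      exact ⟨s, by simp, p.fst_mem_support_of_mem_edges hep⟩
  -- vertex count
  have hLups : ∀ x ∈ Lu, x ∉ p.support := fun x hx hxp => hdisju x hxp ((hLumem x).mp hx)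
  have hLvps : ∀ x ∈ Lv, x ∉ p.support := fun x hx hxp => hdisjv x hxp ((hLvmem x).mp hx)
  have hLuLv : ∀ x ∈ Lu, x ∉ Lv := by
    intro x hx hx'
    exact huv (((hLumem x).mp hx).trans ((hLvmem x).mp hx').symm)
  have hd1 : Disjoint p.support.toFinset Lu.toFinset := by
    rw [Finset.disjoint_left]
    intro x hx hx'
    exact hLups x (List.mem_toFinset.mp hx') (List.mem_toFinset.mp hx)
  have hd2 : Disjoint (p.support.toFinset ∪ Lu.toFinset) Lv.toFinset := by
    rw [Finset.disjoint_left]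
    intro x hx hx'
    rcases Finset.mem_union.mp hx with h | h
    · exact hLvps x (List.mem_toFinset.mp hx') (List.mem_toFinset.mp h)
    · exact hLuLv x (List.mem_toFinset.mp h) (List.mem_toFinset.mp hx')
  have hVsplit : n = p.support.length + Lu.length + Lv.length := by
    have huniv : p.support.toFinset ∪ Lu.toFinset ∪ Lv.toFinset = Finset.univ := by
      apply Finset.eq_univ_of_forall
      intro x
      simp only [Finset.mem_union, List.mem_toFinset]
      by_cases hx : x ∈ p.support
      · exact Or.inl (Or.inl hx)
      · have hor : H.Reachable u x ∨ H.Reachable v x := by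
          by_contra hno
          exact hx ((hps_iff x).mpr hno)
        rcases hor with h | h
        · exact Or.inl (Or.inr ((hLumem x).mpr h))
        · exact Or.inr ((hLvmem x).mpr h)
    have h1 : (p.support.toFinset ∪ Lu.toFinset ∪ Lv.toFinset).card = Fintype.card V := by
      rw [huniv, Finset.card_univ]
    rw [Finset.card_union_of_disjoint hd2, Finset.card_union_of_disjoint hd1,
      List.toFinset_card_of_nodup hpsnodup, List.toFinset_card_of_nodup hLunodup,
      List.toFinset_card_of_nodup hLvnodup] at h1
    omega
  -- edge count
  set FH := H.edgeSet.toFinite.toFinset with hFHdef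
  have hFHmem : ∀ e, e ∈ FH ↔ e ∈ H.edgeSet := fun e => Set.Finite.mem_toFinset _
  have hFHcard : FH.card = k := by
    rw [← hHk, Set.ncard_eq_toFinset_card _ H.edgeSet.toFinite]
  set Fu := (zipE Lu).toFinset with hFudef
  set Fv := (zipE Lv).toFinset with hFvdef
  set Fp := p.edges.toFinset ∩ FH with hFpdef
  have hFucard : Fu.card + 1 = Lu.length := by
    rw [hFudef, List.toFinset_card_of_nodup (nodup_zipE hLunodup)]
    exact length_zipE' Lu hLune
  have hFvcard : Fv.card + 1 = Lv.length := by
    rw [hFvdef, List.toFinset_card_of_nodup (nodup_zipE hLvnodup)]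
    exact length_zipE' Lv hLvne
  have hFpP : ∀ e ∈ Fp, e ∈ p.edges ∧ e ∈ H.edgeSet := by
    intro e he
    obtain ⟨h1, h2⟩ := Finset.mem_inter.mp he
    exact ⟨List.mem_toFinset.mp h1, (hFHmem e).mp h2⟩
  have hEsplit : k = Fu.card + Fv.card + Fp.card := by
    have hsub : FH = Fu ∪ Fv ∪ Fp := by
      apply Finset.Subset.antisymm
      · intro e
        induction e using Sym2.ind with
        | _ s t =>
          intro he
          rw [hFHmem] at he
          have hadj : H.Adj s t := he
          rcases hcomp s ⟨t, hadj⟩ with h | h | ⟨j, hj⟩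
          · exact Finset.mem_union_left _ (Finset.mem_union_left _
              (List.mem_toFinset.mpr ((hLuedge _).mpr ⟨he, s, by simp, h⟩)))
          · exact Finset.mem_union_left _ (Finset.mem_union_right _
              (List.mem_toFinset.mpr ((hLvedge _).mpr ⟨he, s, by simp, h⟩)))
          · have hep : s(s, t) ∈ p.edges := hPabsorb _ he ⟨j, s, by simp, hj⟩
            exact Finset.mem_union_right _
              (Finset.mem_inter.mpr ⟨List.mem_toFinset.mpr hep, (hFHmem _).mpr he⟩)
      · intro e he
        rcases Finset.mem_union.mp he with h | h
        · rcases Finset.mem_union.mp h with h' | h'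
          · exact (hFHmem e).mpr ((hLuedge e).mp (List.mem_toFinset.mp h')).1
          · exact (hFHmem e).mpr ((hLvedge e).mp (List.mem_toFinset.mp h')).1
        · exact (Finset.mem_inter.mp h).2
    have hduv : Disjoint Fu Fv := by
      rw [Finset.disjoint_left]
      intro e he he'
      have h1 := (hLuedge e).mp (List.mem_toFinset.mp he)
      have h2 := (hLvedge e).mp (List.mem_toFinset.mp he')
      exact hcompdisj e h1.1 h1.2 h2.2
    have hdup : Disjoint (Fu ∪ Fv) Fp := by
      rw [Finset.disjoint_left]
      intro e he he'
      have hep : e ∈ p.edges := (hFpP e he').1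
      rcases Finset.mem_union.mp he with h | h
      · obtain ⟨_, x, hxe', hr⟩ := (hLuedge e).mp (List.mem_toFinset.mp h)
        exact hdisju x (hedge_supp e hep x hxe') hr
      · obtain ⟨_, x, hxe', hr⟩ := (hLvedge e).mp (List.mem_toFinset.mp h)
        exact hdisjv x (hedge_supp e hep x hxe') hr
    rw [← hFHcard, hsub, Finset.card_union_of_disjoint hdup,
      Finset.card_union_of_disjoint hduv]
  -- fresh colors
  set B := (p.edges.map cP).toFinset with hBdef
  set used := FH.image c ∪ B with huseddef
  have hAcard : (FH.image c).card = k := by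
    rw [Finset.card_image_of_injOn, hFHcard]
    intro e he e' he' hce
    exact hc.1 ((hFHmem e).mp (Finset.mem_coe.mp he)) ((hFHmem e').mp (Finset.mem_coe.mp he')) hce
  have hBcard : B.card ≤ p.length := by
    calc B.card ≤ (p.edges.map cP).length := List.toFinset_card_le _
    _ = p.edges.length := List.length_map _
    _ = p.length := p.length_edges
  have hIsub : Fp.image c ⊆ B := by
    intro x hx
    obtain ⟨e, he, rfl⟩ := Finset.mem_image.mp hx
    obtain ⟨hep, heH⟩ := hFpP e he
    rw [hBdef, List.mem_toFinset, ← hPagree e hep heH]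
    exact List.mem_map_of_mem (f := cP) hep
  have hIcard : (Fp.image c).card = Fp.card := by
    apply Finset.card_image_of_injOn
    intro e he e' he' hce
    exact hc.1 (hFpP e (Finset.mem_coe.mp he)).2 (hFpP e' (Finset.mem_coe.mp he')).2 hce
  have hIsubA : Fp.image c ⊆ FH.image c :=
    Finset.image_subset_image Finset.inter_subset_right
  have husedsub : used ⊆ FH.image c ∪ (B \ Fp.image c) := by
    intro x hx
    rcases Finset.mem_union.mp hx with h | h
    · exact Finset.mem_union_left _ h
    · by_cases h' : x ∈ Fp.image c
      · exact Finset.mem_union_left _ (hIsubA h')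
      · exact Finset.mem_union_right _ (Finset.mem_sdiff.mpr ⟨h, h'⟩)
  have husedcard : used.card + 3 ≤ n := by
    have h1 : used.card ≤ k + (B \ Fp.image c).card := by
      calc used.card ≤ (FH.image c ∪ (B \ Fp.image c)).card := Finset.card_le_card husedsub
      _ ≤ (FH.image c).card + (B \ Fp.image c).card := Finset.card_union_le _ _
      _ = k + (B \ Fp.image c).card := by rw [hAcard]
    have h2 : (B \ Fp.image c).card = B.card - (Fp.image c).card := Finset.card_sdiff_of_subset hIsub
    have h3 : (Fp.image c).card ≤ B.card := Finset.card_le_card hIsub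
    omega
  have hcompl : 1 < (Finset.univ \ used).card := by
    have h1 : (Finset.univ \ used).card = (Finset.univ : Finset (Fin n)).card - used.card :=
      Finset.card_sdiff_of_subset (Finset.subset_univ _)
    have h2 : (Finset.univ : Finset (Fin n)).card = n := by
      rw [Finset.card_univ, Fintype.card_fin]
    have h3 : used.card ≤ (Finset.univ : Finset (Fin n)).card :=
      Finset.card_le_card (Finset.subset_univ _)
    omega
  obtain ⟨f1, hf1, f2, hf2, hf12⟩ := Finset.one_lt_card.mp hcompl
  have hfresh : ∀ g : Fin n, g ∈ Finset.univ \ used →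
      (∀ e ∈ H.edgeSet, g ≠ c e) ∧ (∀ e ∈ p.edges, g ≠ cP e) := by
    intro g hg
    have hgu : g ∉ used := (Finset.mem_sdiff.mp hg).2
    constructor
    · intro e he hgc
      exact hgu (Finset.mem_union_left _ (Finset.mem_image.mpr ⟨e, (hFHmem e).mpr he, hgc.symm⟩))
    · intro e he hgc
      refine hgu (Finset.mem_union_right _ ?_)
      rw [hBdef, List.mem_toFinset, hgc]
      exact List.mem_map_of_mem (f := cP) he
  -- the attaching vertex
  set w := Lu.getLast hLune with hwdef
  have hwLu : w ∈ Lu := List.getLast_mem hLune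
  have hwru : H.Reachable u w := (hLumem w).mp hwLu
  have hwps : w ∉ p.support := fun h => hdisju w h hwru
  have hwa : w ≠ a := fun h => hwps (h ▸ p.start_mem_support)
  have hwb : w ≠ b := fun h => hwps (h ▸ p.end_mem_support)
  -- postprocessing: convert the conclusion of `build` to the required statement
  have postprocess :
      (∃ (b' : V) (p₀ : (⊤ : SimpleGraph V).Walk u b') (c₀ : Sym2 V → Fin n),
        p₀.IsPath ∧
        {x | x ∈ p₀.support} = {x | x ∈ p.support} ∪ {x | H.Reachable u x} ∧
        RainbowColoring G {e | e ∈ p₀.edges} c₀ ∧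
        (∀ e ∈ H.edgeSet,
          ((∃ x ∈ e, x ∈ p.support) ∨ (∃ x ∈ e, H.Reachable u x)) → e ∈ p₀.edges) ∧
        (∀ e ∈ p₀.edges, e ∈ H.edgeSet → c₀ e = c e) ∧
        (∀ e ∈ p₀.edges, e ∉ H.edgeSet → ∀ e' ∈ H.edgeSet, c₀ e ≠ c e')) →
      (∃ (b' : V) (p₀ : (⊤ : SimpleGraph V).Walk u b') (c₀ : Sym2 V → Fin n),
        p₀.IsPath ∧
        {w | w ∈ p₀.support} = {w | w ∈ p.support} ∪ {w | H.Reachable u w} ∧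
        RainbowColoring G {e | e ∈ p₀.edges} c₀ ∧
        (∀ e ∈ H.edgeSet,
          ((∃ j, ∃ x ∈ e, H.Reachable (vj j) x) ∨ (∃ x ∈ e, H.Reachable u x)) → e ∈ p₀.edges) ∧
        (∀ e ∈ p₀.edges, e ∈ H.edgeSet → c₀ e = c e) ∧
        (∀ e ∈ p₀.edges, e ∉ H.edgeSet → ∀ e' ∈ H.edgeSet, c₀ e ≠ c e')) := by
    rintro ⟨b', p₀, c₀, h1, h2, h3, h4, h5, h6⟩
    refine ⟨b', p₀, c₀, h1, h2, h3, ?_, h5, h6⟩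
    intro e he hcase
    apply h4 e he
    rcases hcase with ⟨j, x, hxe, hr⟩ | hcase2
    · exact Or.inl (hmemsupp e (hPabsorb e he ⟨j, x, hxe, hr⟩))
    · exact Or.inr hcase2
  apply postprocess
  -- facts for the two "direct" candidates
  have hheadps : ∀ h, p.support.head h = a := head_support p
  have hrevne : p.support.reverse ≠ [] := by simp [hpsne]
  have hrevnodup : p.support.reverse.Nodup := List.nodup_reverse.mpr hpsnodup
  have hrevmem : ∀ x, x ∈ p.support.reverse ↔ x ∈ p.support := fun x => List.mem_reverse
  have hheadrev : p.support.reverse.head hrevne = b := by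
    rw [List.head_reverse]
    exact last_support p _
  have hmemrevzip : ∀ e, e ∈ zipE p.support.reverse ↔ e ∈ p.edges := by
    intro e
    rw [zipE_reverse, List.mem_reverse, hpedges]
  by_cases hdir : (G f1).Adj w a ∨ (G f2).Adj w a ∨ (G f1).Adj w b ∨ (G f2).Adj w b
  · rcases hdir with h | h | h | h
    · exact build G H c cP hc u p hcP hPH Lu hLune hLuhead hLunodup hLumem hLuedge
        hdisju hHcross f1 f2 hf12 (hfresh f1 hf1).1 (hfresh f2 hf2).1
        (hfresh f1 hf1).2 (hfresh f2 hf2).2 p.support hpsne hpsnodup (fun x => Iff.rfl)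
        (by rw [hheadps]; exact h)
        (fun e he hep => absurd (show e ∈ p.edges by rw [hpedges]; exact he) hep)
        (fun e he e' he' hep _ => absurd (show e ∈ p.edges by rw [hpedges]; exact he) hep)
        (fun e hep _ => by rw [← hpedges]; exact hep)
    · exact build G H c cP hc u p hcP hPH Lu hLune hLuhead hLunodup hLumem hLuedge
        hdisju hHcross f2 f1 hf12.symm (hfresh f2 hf2).1 (hfresh f1 hf1).1
        (hfresh f2 hf2).2 (hfresh f1 hf1).2 p.support hpsne hpsnodup (fun x => Iff.rfl)
        (by rw [hheadps]; exact h)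
        (fun e he hep => absurd (show e ∈ p.edges by rw [hpedges]; exact he) hep)
        (fun e he e' he' hep _ => absurd (show e ∈ p.edges by rw [hpedges]; exact he) hep)
        (fun e hep _ => by rw [← hpedges]; exact hep)
    · exact build G H c cP hc u p hcP hPH Lu hLune hLuhead hLunodup hLumem hLuedge
        hdisju hHcross f1 f2 hf12 (hfresh f1 hf1).1 (hfresh f2 hf2).1
        (hfresh f1 hf1).2 (hfresh f2 hf2).2 p.support.reverse hrevne hrevnodup hrevmem
        (by rw [show p.support.reverse.head hrevne = b from hheadrev]; exact h)
        (fun e he hep => absurd ((hmemrevzip e).mp he) hep)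
        (fun e he e' he' hep _ => absurd ((hmemrevzip e).mp he) hep)
        (fun e hep _ => (hmemrevzip e).mpr hep)
    · exact build G H c cP hc u p hcP hPH Lu hLune hLuhead hLunodup hLumem hLuedge
        hdisju hHcross f2 f1 hf12.symm (hfresh f2 hf2).1 (hfresh f1 hf1).1
        (hfresh f2 hf2).2 (hfresh f1 hf1).2 p.support.reverse hrevne hrevnodup hrevmem
        (by rw [show p.support.reverse.head hrevne = b from hheadrev]; exact h)
        (fun e he hep => absurd ((hmemrevzip e).mp he) hep)
        (fun e he e' he' hep _ => absurd ((hmemrevzip e).mp he) hep)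
        (fun e hep _ => (hmemrevzip e).mpr hep)
  · -- rotation case
    push_neg at hdir
    obtain ⟨hna1, hna2, hnb1, hnb2⟩ := hdir
    set ℓ := p.support.length with hldef
    set psv : ℕ → V := fun i => p.support.getD i w with hpsvdef
    have hpsv : ∀ i (h : i < ℓ), psv i = p.support[i]'h := by
      intro i h
      rw [hpsvdef]
      exact List.getD_eq_getElem p.support w h
    have hpsv0 : psv 0 = a := by
      rw [hpsvdef]
      have hcons : p.support = a :: p.support.tail := p.support_eq_cons
      rw [hcons]
      rfl
    have hpsvlast : psv (ℓ - 1) = b := by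
      have h1 : p.support.getLast hpsne = b := last_support p _
      rw [List.getLast_eq_getElem] at h1
      rw [hpsv (ℓ - 1) (by omega)]
      exact h1
    set SS : Fin n → Finset ℕ :=
      fun f => (Finset.range (ℓ - 1)).filter (fun i => 0 < i ∧ (G f).Adj w (psv i)) with hSSdef
    set TT : Fin n → Finset ℕ :=
      fun f => (Finset.range (ℓ - 1)).filter (fun i => (G f).Adj a (psv (i + 1))) with hTTdef
    set Bad : Finset ℕ :=
      (Finset.range (ℓ - 1)).filter (fun i => s(psv i, psv (i + 1)) ∈ H.edgeSet) with hBaddef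
    have hdLuLv : Disjoint Lu.toFinset Lv.toFinset := by
      rw [Finset.disjoint_left]
      intro x hx hx'
      exact hLuLv x (List.mem_toFinset.mp hx) (List.mem_toFinset.mp hx')
    set E' := (Lu.toFinset ∪ Lv.toFinset).erase w with hE'def
    have hE'card : E'.card + 1 = Lu.length + Lv.length := by
      have hwmem : w ∈ Lu.toFinset ∪ Lv.toFinset :=
        Finset.mem_union_left _ (List.mem_toFinset.mpr hwLu)
      have h1 : E'.card = (Lu.toFinset ∪ Lv.toFinset).card - 1 :=
        Finset.card_erase_of_mem hwmem
      have h2 : 0 < (Lu.toFinset ∪ Lv.toFinset).card := Finset.card_pos.mpr ⟨w, hwmem⟩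
      have h3 : (Lu.toFinset ∪ Lv.toFinset).card = Lu.length + Lv.length := by
        rw [Finset.card_union_of_disjoint hdLuLv, List.toFinset_card_of_nodup hLunodup,
          List.toFinset_card_of_nodup hLvnodup]
      omega
    have hoffpath : ∀ x : V, x ∉ p.support → x ≠ w → x ∈ E' := by
      intro x hxps hxw
      rw [hE'def, Finset.mem_erase]
      refine ⟨hxw, ?_⟩
      have hor : H.Reachable u x ∨ H.Reachable v x := by
        by_contra hno
        exact hxps ((hps_iff x).mpr hno)
      rcases hor with h | h
      · exact Finset.mem_union_left _ (List.mem_toFinset.mpr ((hLumem x).mpr h))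
      · exact Finset.mem_union_right _ (List.mem_toFinset.mpr ((hLvmem x).mpr h))
    have count : ∀ f : Fin n, ¬(G f).Adj w a → ¬(G f).Adj w b →
        n + k + 2 ≤ (SS f).card + (TT f).card + 2 * (Lu.length + Lv.length) := by
      intro f hfa hfb
      have hsσ := hσ f hwa hfa
      rw [Set.ncard_eq_toFinset_card _ ((G f).neighborSet w).toFinite,
        Set.ncard_eq_toFinset_card _ ((G f).neighborSet a).toFinite] at hsσ
      have hWsub : ((G f).neighborSet w).toFinite.toFinset ⊆ (SS f).image psv ∪ E' := by
        intro x hx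
        rw [Set.Finite.mem_toFinset, SimpleGraph.mem_neighborSet] at hx
        by_cases hxps : x ∈ p.support
        · apply Finset.mem_union_left
          have hilt : p.support.idxOf x < ℓ := List.idxOf_lt_length_iff.mpr hxps
          have hval : psv (p.support.idxOf x) = x := by
            rw [hpsv _ hilt]
            exact List.getElem_idxOf hilt
          have hne0 : p.support.idxOf x ≠ 0 := by
            intro h0
            apply hfa
            have : x = a := by rw [← hval, h0, hpsv0]
            rw [← this]; exact hx
          have hnelast : p.support.idxOf x ≠ ℓ - 1 := by
            intro h0
            apply hfb
            have : x = b := by rw [← hval, h0, hpsvlast]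
            rw [← this]; exact hx
          refine Finset.mem_image.mpr ⟨p.support.idxOf x, ?_, hval⟩
          rw [hSSdef]
          simp only [Finset.mem_filter, Finset.mem_range]
          exact ⟨by omega, by omega, by rw [hval]; exact hx⟩
        · exact Finset.mem_union_right _ (hoffpath x hxps hx.ne')
      have hAsub : ((G f).neighborSet a).toFinite.toFinset ⊆
          (TT f).image (fun i => psv (i + 1)) ∪ E' := by
        intro x hx
        rw [Set.Finite.mem_toFinset, SimpleGraph.mem_neighborSet] at hx
        have hxw : x ≠ w := by
          rintro rfl
          exact hfa hx.symm
        by_cases hxps : x ∈ p.support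
        · apply Finset.mem_union_left
          have hilt : p.support.idxOf x < ℓ := List.idxOf_lt_length_iff.mpr hxps
          have hval : psv (p.support.idxOf x) = x := by
            rw [hpsv _ hilt]
            exact List.getElem_idxOf hilt
          have hne0 : p.support.idxOf x ≠ 0 := by
            intro h0
            apply hx.ne
            rw [← hval, h0, hpsv0]
          have heq : p.support.idxOf x - 1 + 1 = p.support.idxOf x := by omega
          refine Finset.mem_image.mpr ⟨p.support.idxOf x - 1, ?_, by rw [heq, hval]⟩
          rw [hTTdef]
          simp only [Finset.mem_filter, Finset.mem_range]
          refine ⟨by omega, ?_⟩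
          rw [heq, hval]
          exact hx
        · exact Finset.mem_union_right _ (hoffpath x hxps hxw)
      have h1 : ((G f).neighborSet w).toFinite.toFinset.card ≤ (SS f).card + E'.card := by
        calc ((G f).neighborSet w).toFinite.toFinset.card
            ≤ ((SS f).image psv ∪ E').card := Finset.card_le_card hWsub
        _ ≤ ((SS f).image psv).card + E'.card := Finset.card_union_le _ _
        _ ≤ (SS f).card + E'.card := Nat.add_le_add_right (Finset.card_image_le) _
      have h2 : ((G f).neighborSet a).toFinite.toFinset.card ≤ (TT f).card + E'.card := by
        calc ((G f).neighborSet a).toFinite.toFinset.card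
            ≤ ((TT f).image (fun i => psv (i + 1)) ∪ E').card := Finset.card_le_card hAsub
        _ ≤ ((TT f).image (fun i => psv (i + 1))).card + E'.card := Finset.card_union_le _ _
        _ ≤ (TT f).card + E'.card := Nat.add_le_add_right (Finset.card_image_le) _
      omega
    have hBadcard : Bad.card ≤ Fp.card := by
      apply Finset.card_le_card_of_injOn (fun i => s(psv i, psv (i + 1)))
      · intro i hi
        rw [hBaddef] at hi
        simp only [Finset.mem_coe, Finset.mem_filter, Finset.mem_range] at hi
        obtain ⟨hiℓ, hiH⟩ := hi
        have hi1 : i + 1 < ℓ := by omega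
        refine Finset.mem_inter.mpr ⟨List.mem_toFinset.mpr ?_, (hFHmem _).mpr hiH⟩
        rw [hpedges, mem_zipE_iff]
        exact ⟨i, hi1, by beta_reduce; rw [hpsv i (by omega), hpsv (i + 1) hi1]⟩
      · intro i hi j hj hij
        rw [Finset.mem_coe, hBaddef] at hi hj
        simp only [Finset.mem_filter, Finset.mem_range] at hi hj
        have hi1 : i + 1 < ℓ := by omega
        have hj1 : j + 1 < ℓ := by omega
        apply zipE_pos_unique hpsnodup hi1 hj1
        rw [← hpsv i (by omega), ← hpsv (i + 1) hi1, ← hpsv j (by omega), ← hpsv (j + 1) hj1]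
        exact hij
    have hkey : ∃ g1 g2 : Fin n, g1 ∈ Finset.univ \ used ∧ g2 ∈ Finset.univ \ used ∧
        g1 ≠ g2 ∧ ℓ + Fp.card ≤ (SS g1).card + (TT g2).card := by
      have hc1 := count f1 hna1 hnb1
      have hc2 := count f2 hna2 hnb2
      rcases le_total ((SS f1).card + (TT f2).card) ((SS f2).card + (TT f1).card) with hle | hle
      · exact ⟨f2, f1, hf2, hf1, hf12.symm, by omega⟩
      · exact ⟨f1, f2, hf1, hf2, hf12, by omega⟩
    obtain ⟨g1, g2, hg1m, hg2m, hg12, hST⟩ := hkey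
    have hUcard : ((SS g1) ∪ (TT g2)).card ≤ ℓ - 1 := by
      have hsub : (SS g1) ∪ (TT g2) ⊆ Finset.range (ℓ - 1) := by
        intro x hx
        rcases Finset.mem_union.mp hx with h | h
        · rw [hSSdef] at h; exact Finset.mem_of_mem_filter _ h
        · rw [hTTdef] at h; exact Finset.mem_of_mem_filter _ h
      calc ((SS g1) ∪ (TT g2)).card ≤ (Finset.range (ℓ - 1)).card := Finset.card_le_card hsub
      _ = ℓ - 1 := Finset.card_range _
    have hInter := Finset.card_inter_add_card_union (SS g1) (TT g2)
    have hgood : 0 < (((SS g1) ∩ (TT g2)) \ Bad).card := by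
      have hsub2 : (SS g1) ∩ (TT g2) ⊆ (((SS g1) ∩ (TT g2)) \ Bad) ∪ Bad := by
        intro x hx
        by_cases hb : x ∈ Bad
        · exact Finset.mem_union_right _ hb
        · exact Finset.mem_union_left _ (Finset.mem_sdiff.mpr ⟨hx, hb⟩)
      have h3 : ((SS g1) ∩ (TT g2)).card ≤ (((SS g1) ∩ (TT g2)) \ Bad).card + Bad.card :=
        le_trans (Finset.card_le_card hsub2) (Finset.card_union_le _ _)
      omega
    obtain ⟨i, hi⟩ := Finset.card_pos.mp hgood
    rw [Finset.mem_sdiff, Finset.mem_inter] at hi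
    obtain ⟨⟨hiS, hiT⟩, hiBad⟩ := hi
    rw [hSSdef] at hiS
    rw [hTTdef] at hiT
    simp only [Finset.mem_filter, Finset.mem_range] at hiS hiT
    obtain ⟨hiR, hi0, hwadj⟩ := hiS
    obtain ⟨_, haadj⟩ := hiT
    have hiBad' : s(psv i, psv (i + 1)) ∉ H.edgeSet := by
      intro hmem
      apply hiBad
      rw [hBaddef]
      simp only [Finset.mem_filter, Finset.mem_range]
      exact ⟨hiR, hmem⟩
    have hi1 : i + 1 < ℓ := by omega
    -- the rotated list
    set t1 := p.support.take (i + 1) with ht1def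
    set t2 := p.support.drop (i + 1) with ht2def
    have ht1ne : t1 ≠ [] := by
      apply List.ne_nil_of_length_pos
      rw [ht1def, List.length_take]
      omega
    have ht2ne : t2 ≠ [] := by
      apply List.ne_nil_of_length_pos
      rw [ht2def, List.length_drop]
      omega
    have htd : t1 ++ t2 = p.support := List.take_append_drop _ _
    have ht2cons : t2 = psv (i + 1) :: p.support.drop (i + 2) := by
      rw [ht2def, List.drop_eq_getElem_cons hi1, hpsv (i + 1) hi1]
    have ht2head : t2.head ht2ne = psv (i + 1) := head_eq_of_eq_cons ht2cons ht2ne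
    have ht1eq : t1 = p.support.take i ++ [psv i] := by
      rw [ht1def, List.take_succ]
      congr 1
      rw [List.getElem?_eq_getElem (by omega : i < p.support.length), hpsv i (by omega)]
      rfl
    have ht1last : t1.getLast ht1ne = psv i := getLast_eq_of_concat ht1eq ht1ne
    have hcons : p.support = a :: p.support.tail := p.support_eq_cons
    have ht1cons : t1 = a :: p.support.tail.take i := by
      rw [ht1def]
      conv_lhs => rw [hcons]
      rfl
    have ht1rne : t1.reverse ≠ [] := by simp [ht1ne]
    have ht1rlast : t1.reverse.getLast ht1rne = a := by
      rw [List.getLast_reverse]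
      exact head_eq_of_eq_cons ht1cons ht1ne
    set M := t1.reverse ++ t2 with hMdef
    have hMne : M ≠ [] := by simp [hMdef, ht1rne]
    have ht1rev : t1.reverse = psv i :: (p.support.take i).reverse := by
      rw [ht1eq]
      simp
    have hMeq : M = psv i :: ((p.support.take i).reverse ++ t2) := by
      rw [hMdef, ht1rev]
      rfl
    have hMhead : M.head hMne = psv i := head_eq_of_eq_cons hMeq hMne
    have hzipps : p.edges = zipE t1 ++ s(psv i, psv (i + 1)) :: zipE t2 := by
      rw [hpedges, ← htd, zipE_append t1 t2 ht1ne ht2ne, ht1last, ht2head]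
    have hzipM : zipE M = zipE t1.reverse ++ s(a, psv (i + 1)) :: zipE t2 := by
      rw [hMdef, zipE_append t1.reverse t2 ht1rne ht2ne, ht1rlast, ht2head]
    have hzipM_mem : ∀ e, e ∈ zipE M ↔
        (e ∈ zipE t1 ∨ e = s(a, psv (i + 1)) ∨ e ∈ zipE t2) := by
      intro e
      rw [hzipM]
      simp only [List.mem_append, List.mem_cons, zipE_reverse, List.mem_reverse]
    have hzipps_mem : ∀ e, e ∈ p.edges ↔
        (e ∈ zipE t1 ∨ e = s(psv i, psv (i + 1)) ∨ e ∈ zipE t2) := by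
      intro e
      rw [hzipps]
      simp only [List.mem_append, List.mem_cons]
    have hnd : (t1 ++ t2).Nodup := by rw [htd]; exact hpsnodup
    obtain ⟨hnd1, hnd2, hnd3⟩ := List.nodup_append.mp hnd
    have hMnodup : M.Nodup := by
      rw [hMdef]
      apply List.Nodup.append (List.nodup_reverse.mpr hnd1) hnd2
      intro x hx hx'
      exact hnd3 _ (List.mem_reverse.mp hx) _ hx' rfl
    have hMmem : ∀ x, x ∈ M ↔ x ∈ p.support := by
      intro x
      rw [hMdef, ← htd]
      simp only [List.mem_append, List.mem_reverse]
    have hadjM : (G g1).Adj w (M.head hMne) := by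
      rw [hMhead]
      exact hwadj
    have hnewM : ∀ e ∈ zipE M, e ∉ p.edges → e ∈ (G g2).edgeSet ∧ e ∉ H.edgeSet := by
      intro e he hep
      rcases (hzipM_mem e).mp he with h | h | h
      · exact absurd ((hzipps_mem e).mpr (Or.inl h)) hep
      · subst h
        constructor
        · exact haadj
        · intro heH
          exact hep (hHcross _ heH ⟨a, by simp, p.start_mem_support⟩)
      · exact absurd ((hzipps_mem e).mpr (Or.inr (Or.inr h))) hep
    have honeM : ∀ e ∈ zipE M, ∀ e' ∈ zipE M, e ∉ p.edges → e' ∉ p.edges → e = e' := by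
      intro e he e' he' hep hep'
      rcases (hzipM_mem e).mp he with h | h | h
      · exact absurd ((hzipps_mem e).mpr (Or.inl h)) hep
      · rcases (hzipM_mem e').mp he' with h' | h' | h'
        · exact absurd ((hzipps_mem e').mpr (Or.inl h')) hep'
        · rw [h, h']
        · exact absurd ((hzipps_mem e').mpr (Or.inr (Or.inr h'))) hep'
      · exact absurd ((hzipps_mem e).mpr (Or.inr (Or.inr h))) hep
    have hcoverM : ∀ e ∈ p.edges, e ∈ H.edgeSet → e ∈ zipE M := by
      intro e hep heH
      rcases (hzipps_mem e).mp hep with h | h | h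
      · exact (hzipM_mem e).mpr (Or.inl h)
      · subst h
        exact absurd heH hiBad'
      · exact (hzipM_mem e).mpr (Or.inr (Or.inr h))
    exact build G H c cP hc u p hcP hPH Lu hLune hLuhead hLunodup hLumem hLuedge
      hdisju hHcross g1 g2 hg12 (hfresh g1 hg1m).1 (hfresh g2 hg2m).1
      (hfresh g1 hg1m).2 (hfresh g2 hg2m).2 M hMne hMnodup hMmem hadjM hnewM honeM hcoverM
end
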